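/- arXiv:1607.03236 — 4 statements merged into one kernel-verified Lean document; each statement's English description precedes it below -/
import Mathlib

section
/- Let Π and Δ be orthogonal projections on ℂ^D, let ρ be a density matrix on ℂ^D satisfying Δ ρ Δ = ρ, and let N ≥ 1 be an integer. Define the acceptance probability p_acc := 1 − tr( (Δ(I−Π))^N ρ ((I−Π)Δ)^N ), let A := ΔΠΔ, and let P denote the orthogonal projection onto the span of the eigenvectors of A with eigenvalue at least 1/(2N). Then (1 − e^{−1}) · tr(P ρ) ≤ p_acc ≤ 2N · tr(A ρ). -/
open Matrix
open scoped ComplexOrder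

/-- The orthogonal projection onto the span of the eigenvectors of a Hermitian matrix `A`
with eigenvalue at least `δ`. -/
noncomputable def specProj {d : ℕ} {A : Matrix (Fin d) (Fin d) ℂ} (hA : A.IsHermitian)
    (δ : ℝ) : Matrix (Fin d) (Fin d) ℂ :=
  (hA.eigenvectorUnitary : Matrix (Fin d) (Fin d) ℂ) *
    Matrix.diagonal (fun i => if δ ≤ hA.eigenvalues i then (1 : ℂ) else 0) *
    (hA.eigenvectorUnitary : Matrix (Fin d) (Fin d) ℂ)ᴴ

/-- trace of a conjugated diagonal matrix against `ρ`. -/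
lemma trace_conj_diag_aux {D : ℕ} (U ρ : Matrix (Fin D) (Fin D) ℂ) (c : Fin D → ℂ) :
    ((U * Matrix.diagonal c * Uᴴ) * ρ).trace = ∑ i, c i * (Uᴴ * ρ * U) i i := by
  have h1 : (U * Matrix.diagonal c * Uᴴ) * ρ = U * (Matrix.diagonal c * (Uᴴ * ρ)) := by
    simp only [mul_assoc]
  rw [h1, trace_mul_comm U, mul_assoc, trace_mul_comm, trace_mul_comm _ (Matrix.diagonal c)]
  simp [Matrix.trace, Matrix.diag, Matrix.diagonal_mul, mul_assoc]

lemma psd_diag_re_nonneg {D : ℕ} {σ : Matrix (Fin D) (Fin D) ℂ} (hσ : σ.PosSemidef)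
    (i : Fin D) : 0 ≤ (σ i i).re := by
  have h := hσ.re_dotProduct_nonneg (Pi.single i 1)
  simpa [dotProduct, mulVec, Pi.single_apply, Finset.sum_ite_eq] using h

lemma eigenvalues_le_one_aux {D : ℕ} {A : Matrix (Fin D) (Fin D) ℂ} (hA : A.IsHermitian)
    (h1 : (1 - A).PosSemidef) (i : Fin D) : hA.eigenvalues i ≤ 1 := by
  have key : RCLike.re (star ⇑(hA.eigenvectorBasis i) ⬝ᵥ ((1 - A) *ᵥ ⇑(hA.eigenvectorBasis i)))
      = 1 - hA.eigenvalues i := by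
    rw [sub_mulVec, dotProduct_sub, map_sub, one_mulVec, ← hA.eigenvalues_eq i,
      dotProduct_comm, ← EuclideanSpace.inner_eq_star_dotProduct, inner_self_eq_norm_sq_to_K,
      hA.eigenvectorBasis.orthonormal.1 i]
    norm_num
  have h := h1.re_dotProduct_nonneg ⇑(hA.eigenvectorBasis i)
  linarith [h.trans_eq key]

lemma scalar_upper_aux (N : ℕ) (l : ℝ) (h1 : l ≤ 1) :
    1 - (1 - l) ^ (2 * N) ≤ 2 * N * l := by
  have hb : (-2 : ℝ) ≤ -l := by linarith
  have h := one_add_mul_le_pow hb (2 * N)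
  have h2 : (1 : ℝ) + (2 * N : ℕ) * (-l) = 1 - 2 * N * l := by push_cast; ring
  have h3 : ((1 : ℝ) + -l) = 1 - l := by ring
  rw [h2, h3] at h
  linarith

lemma scalar_lower_aux (N : ℕ) (hN : 1 ≤ N) (l : ℝ) (h1 : l ≤ 1)
    (hl : 1 / (2 * (N : ℝ)) ≤ l) :
    1 - Real.exp (-1) ≤ 1 - (1 - l) ^ (2 * N) := by
  have hNpos : (0 : ℝ) < 2 * N := by positivity
  have step1 : (1 - l) ^ (2 * N) ≤ (1 - 1 / (2 * (N : ℝ))) ^ (2 * N) :=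
    pow_le_pow_left₀ (by linarith) (by linarith) _
  have step2 : (1 - 1 / (2 * (N : ℝ))) ≤ Real.exp (-(1 / (2 * (N : ℝ)))) := by
    have := Real.add_one_le_exp (-(1 / (2 * (N : ℝ))))
    linarith
  have hle1 : 1 / (2 * (N : ℝ)) ≤ 1 := by
    rw [div_le_one hNpos]
    have : (1 : ℝ) ≤ N := by exact_mod_cast hN
    linarith
  have step3 : (1 - 1 / (2 * (N : ℝ))) ^ (2 * N) ≤ Real.exp (-(1 / (2 * (N : ℝ)))) ^ (2 * N) :=
    pow_le_pow_left₀ (by linarith) step2 _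
  have step4 : Real.exp (-(1 / (2 * (N : ℝ)))) ^ (2 * N) = Real.exp (-1) := by
    rw [← Real.exp_nat_mul]
    congr 1
    field_simp
    norm_num
  linarith

lemma scalar_nonneg_aux (N : ℕ) (l : ℝ) (h0 : 0 ≤ l) (h1 : l ≤ 1) :
    0 ≤ 1 - (1 - l) ^ (2 * N) := by
  have h : (1 - l) ^ (2 * N) ≤ 1 := pow_le_one₀ (by linarith : (0 : ℝ) ≤ 1 - l) (by linarith)
  linarith


lemma spectral_main_aux {D : ℕ} (A ρ : Matrix (Fin D) (Fin D) ℂ)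
    (hA : A.IsHermitian) (hApsd : A.PosSemidef)
    (h1Apsd : ((1 : Matrix (Fin D) (Fin D) ℂ) - A).PosSemidef)
    (hρ : ρ.PosSemidef) (hρtr : ρ.trace = 1)
    (N : ℕ) (hN : 1 ≤ N) (p_acc : ℝ)
    (hp : p_acc = 1 - ((((1 : Matrix (Fin D) (Fin D) ℂ) - A) ^ (2 * N) * ρ).trace).re) :
    (1 - Real.exp (-1)) * ((specProj hA (1 / (2 * N)) * ρ).trace).re ≤ p_acc ∧
      p_acc ≤ 2 * N * ((A * ρ).trace).re := by
  have hlam0 : ∀ i, 0 ≤ hA.eigenvalues i := hApsd.eigenvalues_nonneg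
  have hlam1 : ∀ i, hA.eigenvalues i ≤ 1 := eigenvalues_le_one_aux hA h1Apsd
  set U := (hA.eigenvectorUnitary : Matrix (Fin D) (Fin D) ℂ) with hUdef
  set lam := hA.eigenvalues with hlamdef
  have hspec : A = U * Matrix.diagonal (fun i => (lam i : ℂ)) * Uᴴ := by
    exact hA.spectral_theorem
  have hUU' : U * Uᴴ = 1 := by
    rw [hUdef, ← Matrix.star_eq_conjTranspose]
    exact (Matrix.mem_unitaryGroup_iff).mp hA.eigenvectorUnitary.2
  have hU'U : Uᴴ * U = 1 := by
    rw [hUdef, ← Matrix.star_eq_conjTranspose]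
    exact (Matrix.mem_unitaryGroup_iff').mp hA.eigenvectorUnitary.2
  have hconj : ∀ (c : Fin D → ℂ) (k : ℕ),
      (U * Matrix.diagonal c * Uᴴ) ^ k = U * Matrix.diagonal (fun i => c i ^ k) * Uᴴ := by
    intro c k
    induction k with
    | zero => simp [hUU']
    | succ k ih =>
      rw [pow_succ, ih, show U * Matrix.diagonal (fun i => c i ^ k) * Uᴴ *
          (U * Matrix.diagonal c * Uᴴ) =
          U * (Matrix.diagonal (fun i => c i ^ k) * (Uᴴ * U) * Matrix.diagonal c) * Uᴴ from by
        simp only [mul_assoc], hU'U, mul_one, Matrix.diagonal_mul_diagonal]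
      simp [pow_succ]
  have h1A : (1 : Matrix (Fin D) (Fin D) ℂ) - A
      = U * Matrix.diagonal (fun i => 1 - (lam i : ℂ)) * Uᴴ := by
    have hd : Matrix.diagonal (fun i => (1 : ℂ) - (lam i : ℂ))
        = 1 - Matrix.diagonal (fun i => (lam i : ℂ)) := by
      rw [← Matrix.diagonal_one, Matrix.diagonal_sub]
    rw [hd, mul_sub, sub_mul, mul_one, hUU', ← hspec]
  set σ := Uᴴ * ρ * U with hσdef
  have hσpsd : σ.PosSemidef := hρ.conjTranspose_mul_mul_same U
  have hd0 : ∀ i, 0 ≤ (σ i i).re := fun i => psd_diag_re_nonneg hσpsd i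
  have htρ : ρ.trace = ∑ i, σ i i := by
    have h5 : σ.trace = ρ.trace := by
      rw [hσdef, Matrix.trace_mul_cycle, hUU', one_mul]
    rw [← h5]
    simp [Matrix.trace, Matrix.diag]
  have hre : ∀ (c : Fin D → ℝ), ((∑ i, ((c i : ℂ)) * σ i i).re) = ∑ i, c i * (σ i i).re := by
    intro c
    rw [Complex.re_sum]
    congr 1; funext i
    simp [Complex.mul_re]
  have ht2 : (((1 : Matrix (Fin D) (Fin D) ℂ) - A) ^ (2 * N) * ρ).trace
      = ∑ i, ((((1 - lam i) ^ (2 * N) : ℝ)) : ℂ) * σ i i := by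
    rw [h1A, hconj, trace_conj_diag_aux]
    apply Finset.sum_congr rfl
    intro i _
    push_cast
    ring
  have ht2re : ((((1 : Matrix (Fin D) (Fin D) ℂ) - A) ^ (2 * N) * ρ).trace).re
      = ∑ i, (1 - lam i) ^ (2 * N) * (σ i i).re := by
    rw [ht2, hre]
  have ht3re : ((A * ρ).trace).re = ∑ i, lam i * (σ i i).re := by
    conv_lhs => rw [hspec]
    rw [trace_conj_diag_aux]
    exact hre lam
  have ht1re : ((specProj hA (1 / (2 * N)) * ρ).trace).re
      = ∑ i, (if (1 / (2 * (N : ℝ))) ≤ lam i then (1 : ℝ) else 0) * (σ i i).re := by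
    rw [show specProj hA (1 / (2 * N)) = U * Matrix.diagonal
        (fun i => if (1 / (2 * (N : ℝ))) ≤ lam i then (1 : ℂ) else 0) * Uᴴ from rfl,
      trace_conj_diag_aux,
      show (∑ i, (if (1 / (2 * (N : ℝ))) ≤ lam i then (1 : ℂ) else 0) * σ i i)
        = ∑ i, (((if (1 / (2 * (N : ℝ))) ≤ lam i then (1 : ℝ) else 0) : ℝ) : ℂ) * σ i i from by
      apply Finset.sum_congr rfl; intro i _; split <;> simp]
    exact hre _
  have hone : (1 : ℝ) = ∑ i, (σ i i).re := by
    have h6 := congrArg Complex.re htρ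
    rw [hρtr] at h6
    simpa [Complex.re_sum] using h6
  have hsum : p_acc = ∑ i, (1 - (1 - lam i) ^ (2 * N)) * (σ i i).re := by
    rw [hp, ht2re]
    simp only [sub_mul, one_mul]
    rw [Finset.sum_sub_distrib, ← hone]
  constructor
  · rw [ht1re, hsum, Finset.mul_sum]
    apply Finset.sum_le_sum
    intro i _
    by_cases hcase : 1 / (2 * (N : ℝ)) ≤ lam i
    · simp only [hcase, if_true]
      have hlow := scalar_lower_aux N hN (lam i) (hlam1 i) hcase
      calc (1 - Real.exp (-1)) * (1 * (σ i i).re)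
          = (1 - Real.exp (-1)) * (σ i i).re := by ring
        _ ≤ (1 - (1 - lam i) ^ (2 * N)) * (σ i i).re := by
            apply mul_le_mul_of_nonneg_right _ (hd0 i)
            linarith
    · simp only [hcase, if_false]
      have hnn := scalar_nonneg_aux N (lam i) (hlam0 i) (hlam1 i)
      have hz : (1 - Real.exp (-1)) * (0 * (σ i i).re) = 0 := by ring
      rw [hz]
      exact mul_nonneg hnn (hd0 i)
  · rw [ht3re, hsum, Finset.mul_sum]
    apply Finset.sum_le_sum
    intro i _
    have hub := scalar_upper_aux N (lam i) (hlam1 i)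
    calc (1 - (1 - lam i) ^ (2 * N)) * (σ i i).re
        ≤ (2 * N * lam i) * (σ i i).re := mul_le_mul_of_nonneg_right hub (hd0 i)
      _ = 2 * N * (lam i * (σ i i).re) := by ring

/-- Theorem 5: performance of modified Marriott–Watrous amplification.
For orthogonal projections `Π` (here `Pj`) and `Δ` on `ℂ^D`, a density matrix `ρ` with
`ΔρΔ = ρ`, and `N ≥ 1`, the acceptance probability
`p_acc = 1 − tr((Δ(I−Π))^N ρ ((I−Π)Δ)^N)` satisfies
`(1 − e⁻¹)·tr(P ρ) ≤ p_acc ≤ 2N·tr(ΔΠΔ ρ)`, where `P` projects onto the eigenvectors of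
`A = ΔΠΔ` with eigenvalue at least `1/(2N)`. -/
theorem stmt_0 {D : ℕ} (Pj Δ ρ : Matrix (Fin D) (Fin D) ℂ)
    (hPjH : Pj.IsHermitian) (hPj2 : Pj * Pj = Pj)
    (hΔH : Δ.IsHermitian) (hΔ2 : Δ * Δ = Δ)
    (hρ : ρ.PosSemidef) (hρtr : ρ.trace = 1) (hρΔ : Δ * ρ * Δ = ρ)
    (N : ℕ) (hN : 1 ≤ N)
    (hA : (Δ * Pj * Δ).IsHermitian)
    (p_acc : ℝ)
    (hp : p_acc = 1 - ((((Δ * (1 - Pj)) ^ N) * ρ * (((1 - Pj) * Δ) ^ N)).trace).re) :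
    (1 - Real.exp (-1)) * ((specProj hA (1 / (2 * N)) * ρ).trace).re ≤ p_acc ∧
      p_acc ≤ 2 * N * (((Δ * Pj * Δ) * ρ).trace).re := by
  have hρΔ' : ρ * Δ = ρ := by
    rw [← hρΔ, mul_assoc (Δ * ρ) Δ Δ, hΔ2]
  set B := Δ * (1 - Pj) * Δ with hBdef
  have hB : B = Δ - Δ * Pj * Δ := by
    have h : Δ * (1 - Pj) * Δ = Δ * Δ - Δ * Pj * Δ := by noncomm_ring
    rw [hBdef, h, hΔ2]
  have hΔA : Δ * (Δ * Pj * Δ) = Δ * Pj * Δ := by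
    rw [show Δ * (Δ * Pj * Δ) = (Δ * Δ) * Pj * Δ from by simp only [mul_assoc], hΔ2]
  have hAΔ : (Δ * Pj * Δ) * Δ = Δ * Pj * Δ := by
    rw [mul_assoc (Δ * Pj) Δ Δ, hΔ2]
  have hΔB : Δ * B = B := by
    rw [hB, mul_sub, hΔ2, hΔA]
  have hBΔ : B * Δ = B := by
    rw [hB, sub_mul, hΔ2, hAΔ]
  have key1 : ∀ k, (Δ * (1 - Pj)) ^ k * Δ = Δ * B ^ k := by
    intro k
    induction k with
    | zero => simp
    | succ k ih =>
      calc (Δ * (1 - Pj)) ^ (k + 1) * Δ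
          = (Δ * (1 - Pj)) * ((Δ * (1 - Pj)) ^ k * Δ) := by rw [pow_succ', mul_assoc]
        _ = (Δ * (1 - Pj)) * (Δ * B ^ k) := by rw [ih]
        _ = (Δ * (1 - Pj) * Δ) * B ^ k := by simp only [mul_assoc]
        _ = B * B ^ k := rfl
        _ = (Δ * B) * B ^ k := by rw [hΔB]
        _ = Δ * B ^ (k + 1) := by rw [pow_succ', mul_assoc]
  have key2 : ∀ k, Δ * ((1 - Pj) * Δ) ^ k = B ^ k * Δ := by
    intro k
    induction k with
    | zero => simp
    | succ k ih =>
      calc Δ * ((1 - Pj) * Δ) ^ (k + 1)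
          = (Δ * ((1 - Pj) * Δ) ^ k) * ((1 - Pj) * Δ) := by rw [pow_succ, ← mul_assoc]
        _ = (B ^ k * Δ) * ((1 - Pj) * Δ) := by rw [ih]
        _ = B ^ k * (Δ * (1 - Pj) * Δ) := by simp only [mul_assoc]
        _ = B ^ k * B := rfl
        _ = B ^ (k + 1) * Δ := by rw [pow_succ, mul_assoc, hBΔ]
  have hBNΔ : B ^ N * Δ = B ^ N := by
    cases N with
    | zero => omega
    | succ M => rw [pow_succ, mul_assoc, hBΔ]
  have hΔBN : Δ * B ^ N = B ^ N := by
    cases N with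
    | zero => omega
    | succ M => rw [pow_succ', ← mul_assoc, hΔB]
  have hcommA : (1 - Δ * Pj * Δ) * Δ = Δ * (1 - Δ * Pj * Δ) := by
    rw [one_sub_mul, mul_one_sub, hΔA, hAΔ]
  have hBA : B = Δ * (1 - Δ * Pj * Δ) := by
    rw [mul_one_sub, hΔA]; exact hB
  have hBpow : ∀ k, B ^ (k + 1) = Δ * (1 - Δ * Pj * Δ) ^ (k + 1) := by
    intro k
    induction k with
    | zero => simpa using hBA
    | succ k ih =>
      calc B ^ (k + 1 + 1) = B * B ^ (k + 1) := by rw [pow_succ']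
        _ = (Δ * (1 - Δ * Pj * Δ)) * (Δ * (1 - Δ * Pj * Δ) ^ (k + 1)) := by rw [ih, hBA]
        _ = Δ * ((1 - Δ * Pj * Δ) * Δ) * (1 - Δ * Pj * Δ) ^ (k + 1) := by
            simp only [mul_assoc]
        _ = Δ * (Δ * (1 - Δ * Pj * Δ)) * (1 - Δ * Pj * Δ) ^ (k + 1) := by rw [hcommA]
        _ = (Δ * Δ) * ((1 - Δ * Pj * Δ) * (1 - Δ * Pj * Δ) ^ (k + 1)) := by
            simp only [mul_assoc]
        _ = Δ * (1 - Δ * Pj * Δ) ^ (k + 1 + 1) := by rw [hΔ2, ← pow_succ']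
  have hBpow2N : B ^ (2 * N) = Δ * (1 - Δ * Pj * Δ) ^ (2 * N) := by
    cases N with
    | zero => omega
    | succ M =>
      have h2 : 2 * (M + 1) = (2 * M + 1) + 1 := by ring
      rw [h2, hBpow]
  have htr : ((Δ * (1 - Pj)) ^ N * ρ * ((1 - Pj) * Δ) ^ N).trace
      = ((1 - Δ * Pj * Δ) ^ (2 * N) * ρ).trace := by
    calc ((Δ * (1 - Pj)) ^ N * ρ * ((1 - Pj) * Δ) ^ N).trace
        = ((Δ * (1 - Pj)) ^ N * (Δ * ρ * Δ) * ((1 - Pj) * Δ) ^ N).trace := by rw [hρΔ]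
      _ = (((Δ * (1 - Pj)) ^ N * Δ) * ρ * (Δ * ((1 - Pj) * Δ) ^ N)).trace := by
          simp only [mul_assoc]
      _ = ((Δ * B ^ N) * ρ * (B ^ N * Δ)).trace := by rw [key1, key2]
      _ = ((B ^ N * Δ) * (Δ * B ^ N) * ρ).trace := by rw [Matrix.trace_mul_cycle]
      _ = (B ^ N * B ^ N * ρ).trace := by rw [hBNΔ, hΔBN]
      _ = (B ^ (2 * N) * ρ).trace := by rw [← pow_add, two_mul]
      _ = ((Δ * (1 - Δ * Pj * Δ) ^ (2 * N)) * ρ).trace := by rw [hBpow2N]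
      _ = ((ρ * Δ) * (1 - Δ * Pj * Δ) ^ (2 * N)).trace := by rw [Matrix.trace_mul_cycle]
      _ = ((1 - Δ * Pj * Δ) ^ (2 * N) * ρ).trace := by rw [hρΔ', Matrix.trace_mul_comm]
  have hApsd : (Δ * Pj * Δ).PosSemidef := by
    have h := Matrix.posSemidef_conjTranspose_mul_self (Pj * Δ)
    have he : (Pj * Δ)ᴴ * (Pj * Δ) = Δ * Pj * Δ := by
      rw [conjTranspose_mul, hΔH.eq, hPjH.eq,
        show Δ * Pj * (Pj * Δ) = Δ * (Pj * Pj) * Δ from by simp only [mul_assoc], hPj2]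
    rwa [he] at h
  have h1Apsd : ((1 : Matrix (Fin D) (Fin D) ℂ) - Δ * Pj * Δ).PosSemidef := by
    have h1 := Matrix.posSemidef_conjTranspose_mul_self ((1 : Matrix (Fin D) (Fin D) ℂ) - Δ)
    have h2 := Matrix.posSemidef_conjTranspose_mul_self ((1 - Pj) * Δ)
    have he1 : ((1 : Matrix (Fin D) (Fin D) ℂ) - Δ)ᴴ * (1 - Δ) = 1 - Δ := by
      rw [conjTranspose_sub, conjTranspose_one, hΔH.eq]
      have h3 : ((1 : Matrix (Fin D) (Fin D) ℂ) - Δ) * (1 - Δ) = 1 - Δ - Δ + Δ * Δ := by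
        noncomm_ring
      rw [h3, hΔ2]; abel
    have he2 : ((1 - Pj) * Δ)ᴴ * ((1 - Pj) * Δ) = B := by
      rw [conjTranspose_mul, conjTranspose_sub, conjTranspose_one, hΔH.eq, hPjH.eq]
      have h4 : Δ * (1 - Pj) * ((1 - Pj) * Δ) = Δ * ((1 - Pj) * (1 - Pj)) * Δ := by
        simp only [mul_assoc]
      rw [h4, show ((1 : Matrix (Fin D) (Fin D) ℂ) - Pj) * (1 - Pj) = 1 - Pj - Pj + Pj * Pj
          from by noncomm_ring, hPj2,
        show (1 : Matrix (Fin D) (Fin D) ℂ) - Pj - Pj + Pj = 1 - Pj from by abel]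
    rw [he1] at h1; rw [he2] at h2
    have hsum12 := h1.add h2
    have heq : (1 : Matrix (Fin D) (Fin D) ℂ) - Δ + B = 1 - Δ * Pj * Δ := by rw [hB]; abel
    rwa [heq] at hsum12
  rw [htr] at hp
  exact spectral_main_aux (Δ * Pj * Δ) ρ hA hApsd h1Apsd hρ hρtr N hN p_acc hp
end

section
/- (Gentle measurement / almost-as-good-as-new lemma.) Let ρ be a density matrix on ℂ^d and let Λ be a measurement operator (a Hermitian matrix with 0 ≤ Λ ≤ I) such that tr(Λρ) > 0. Then the trace distance between ρ and the post-measurement state √Λ ρ √Λ / tr(Λρ) satisfies ‖ ρ − √Λ ρ √Λ / tr(Λρ) ‖_tr ≤ √( tr((I−Λ)ρ) ). -/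
open Matrix
open scoped ComplexOrder

/-- The positive semidefinite square root of a positive semidefinite matrix
(the definition `Matrix.PosSemidef.sqrt` of the older Mathlib, removed since). -/
noncomputable def Matrix.PosSemidef.sqrt {n 𝕜 : Type*} [Fintype n] [DecidableEq n] [RCLike 𝕜]
    {A : Matrix n n 𝕜} (hA : A.PosSemidef) : Matrix n n 𝕜 :=
  hA.1.eigenvectorUnitary.1 * diagonal ((↑) ∘ (√·) ∘ hA.1.eigenvalues) *
  (star hA.1.eigenvectorUnitary : Matrix n n 𝕜)

/-- The trace distance `‖ρ − σ‖_tr = (1/2)·tr|ρ − σ|`, where `|M| = √(Mᴴ M)`. -/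
noncomputable def traceDist {d : ℕ} (ρ σ : Matrix (Fin d) (Fin d) ℂ) : ℝ :=
  (1 / 2) * ((Matrix.posSemidef_conjTranspose_mul_self (ρ - σ)).sqrt.trace).re

open scoped MatrixOrder in
lemma psd_sqrt_eq_cfc {d : ℕ} {A : Matrix (Fin d) (Fin d) ℂ} (hA : A.PosSemidef) :
    hA.sqrt = CFC.sqrt A := by
  rw [CFC.sqrt_eq_cfc, cfc_nnreal_eq_real _ A, hA.1.cfc_eq]
  simp only [Matrix.IsHermitian.cfc, Unitary.conjStarAlgAut_apply, Real.coe_sqrt, Real.coe_toNNReal']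
  have h : (RCLike.ofReal ∘ (fun x => √(max x 0)) ∘ hA.1.eigenvalues : Fin d → ℂ)
      = (↑) ∘ (√·) ∘ hA.1.eigenvalues :=
    funext fun i => by simp [max_eq_left (hA.eigenvalues_nonneg i)]
  rw [h]; rfl

open scoped MatrixOrder in
lemma Matrix.PosSemidef.posSemidef_sqrt {d : ℕ} {A : Matrix (Fin d) (Fin d) ℂ}
    (hA : A.PosSemidef) : hA.sqrt.PosSemidef := by
  rw [psd_sqrt_eq_cfc]; exact (CFC.sqrt_nonneg A).posSemidef

open scoped MatrixOrder in
lemma Matrix.PosSemidef.sqrt_mul_self {d : ℕ} {A : Matrix (Fin d) (Fin d) ℂ}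
    (hA : A.PosSemidef) : hA.sqrt * hA.sqrt = A := by
  rw [psd_sqrt_eq_cfc]; exact CFC.sqrt_mul_sqrt_self A hA.nonneg

open scoped MatrixOrder in
lemma Matrix.PosSemidef.eq_sqrt_of_sq_eq {d : ℕ} {A B : Matrix (Fin d) (Fin d) ℂ}
    (hB : B.PosSemidef) {hA : A.PosSemidef} (h : B ^ 2 = A) : B = hA.sqrt := by
  rw [psd_sqrt_eq_cfc]; exact (CFC.sqrt_unique (by rw [← pow_two, h]) hB.nonneg).symm

open Matrix in
noncomputable def vecM {d : ℕ} (A : Matrix (Fin d) (Fin d) ℂ) :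
    EuclideanSpace ℂ (Fin d × Fin d) := WithLp.toLp 2 (fun p : Fin d × Fin d => A p.1 p.2)

open Matrix in
lemma inner_vecM {d : ℕ} (A B : Matrix (Fin d) (Fin d) ℂ) :
    (inner ℂ (vecM A) (vecM B) : ℂ) = (Aᴴ * B).trace := by
  rw [PiLp.inner_apply]
  rw [Matrix.trace]
  simp only [Matrix.diag, Matrix.mul_apply, Matrix.conjTranspose_apply, vecM, WithLp.ofLp_toLp,
    RCLike.inner_apply, starRingEnd_apply]
  rw [Fintype.sum_prod_type]
  exact Finset.sum_comm.trans
    (Finset.sum_congr rfl fun _ _ => Finset.sum_congr rfl fun _ _ => mul_comm _ _)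

open Matrix in
lemma trace_form_eq {d : ℕ} (A : Matrix (Fin d) (Fin d) ℂ) :
    (Aᴴ * A).trace = ((‖vecM A‖ : ℝ) : ℂ)^2 := by
  rw [← inner_vecM]; exact inner_self_eq_norm_sq_to_K _

open Matrix in
lemma trace_form_re_nonneg {d : ℕ} (A : Matrix (Fin d) (Fin d) ℂ) :
    0 ≤ ((Aᴴ * A).trace).re := by
  rw [trace_form_eq, ← Complex.ofReal_pow, Complex.ofReal_re]; exact sq_nonneg _

open Matrix in
lemma trace_form_im {d : ℕ} (A : Matrix (Fin d) (Fin d) ℂ) :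
    ((Aᴴ * A).trace).im = 0 := by
  rw [trace_form_eq, ← Complex.ofReal_pow, Complex.ofReal_im]

lemma complex_norm_sq (z : ℂ) : ‖z‖^2 = z.re^2 + z.im^2 := by
  rw [Complex.sq_norm, Complex.normSq_apply]; ring

open Matrix in
lemma trace_CS {d : ℕ} (A B : Matrix (Fin d) (Fin d) ℂ) :
    (((Aᴴ * B).trace).re)^2 + (((Aᴴ * B).trace).im)^2 ≤
      ((Aᴴ * A).trace).re * ((Bᴴ * B).trace).re := by
  have h := norm_inner_le_norm (𝕜 := ℂ) (vecM A) (vecM B)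
  have h2 : ‖(inner ℂ (vecM A) (vecM B) : ℂ)‖^2 ≤ ‖vecM A‖^2 * ‖vecM B‖^2 := by
    rw [← mul_pow]; exact pow_le_pow_left₀ (norm_nonneg _) h 2
  rw [inner_vecM] at h2
  have hA : ((Aᴴ * A).trace).re = ‖vecM A‖^2 := by
    rw [trace_form_eq, ← Complex.ofReal_pow, Complex.ofReal_re]
  have hB : ((Bᴴ * B).trace).re = ‖vecM B‖^2 := by
    rw [trace_form_eq, ← Complex.ofReal_pow, Complex.ofReal_re]
  rw [hA, hB, ← complex_norm_sq]
  exact h2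

lemma key_scalar (a b cc gg hh ε : ℝ) (ha0 : 0 ≤ a) (ha1 : a ≤ 1) (hb0 : 0 ≤ b) (hb1 : b ≤ 1)
    (hcc : 0 ≤ cc) (h1 : gg^2 + hh^2 ≤ a*b) (h2 : (cc-gg)^2 + hh^2 ≤ (1-a)*(1-b))
    (hε : 1 - cc^2 ≤ ε) : a - b ≤ Real.sqrt ε := by
  set v := Real.sqrt (a*b) with hv
  set w := Real.sqrt ((1-a)*(1-b)) with hw
  have hv0 : 0 ≤ v := Real.sqrt_nonneg _
  have hw0 : 0 ≤ w := Real.sqrt_nonneg _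
  have hv2 : v^2 = a*b := Real.sq_sqrt (by positivity)
  have hw2 : w^2 = (1-a)*(1-b) := Real.sq_sqrt (by nlinarith)
  have hgv : gg ≤ v := by nlinarith [sq_nonneg hh]
  have hgw : cc - gg ≤ w := by nlinarith [sq_nonneg hh]
  have hcvw : cc ≤ v + w := by linarith
  have hamgm : v * w ≤ (a*(1-a) + b*(1-b))/2 := by
    have he : (a*b)*((1-a)*(1-b)) = (a*(1-a))*(b*(1-b)) := by ring
    calc v*w = Real.sqrt ((a*(1-a))*(b*(1-b))) := by
              rw [← Real.sqrt_mul (by positivity), he]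
      _ ≤ Real.sqrt (((a*(1-a)+b*(1-b))/2)^2) :=
              Real.sqrt_le_sqrt (by nlinarith [sq_nonneg (a*(1-a)-b*(1-b))])
      _ = (a*(1-a)+b*(1-b))/2 := Real.sqrt_sq (by nlinarith)
  have hkey : (a-b)^2 ≤ ε := by nlinarith [sq_nonneg (v+w)]
  have hε0 : (0:ℝ) ≤ ε := le_trans (sq_nonneg _) hkey
  rcases le_or_gt (a-b) 0 with h|h
  · linarith [Real.sqrt_nonneg ε]
  · exact (Real.le_sqrt h.le hε0).mpr hkey

lemma conjd_mul {d : ℕ} (U : Matrix (Fin d) (Fin d) ℂ) (hU2 : star U * U = 1)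
    (v w : Fin d → ℂ) :
    (U * Matrix.diagonal v * star U) * (U * Matrix.diagonal w * star U)
      = U * Matrix.diagonal (fun i => v i * w i) * star U := by
  simp only [Matrix.mul_assoc]
  rw [← Matrix.mul_assoc (star U) U, hU2, one_mul,
    ← Matrix.mul_assoc (Matrix.diagonal v) (Matrix.diagonal w), Matrix.diagonal_mul_diagonal]

lemma conjd_herm {d : ℕ} (U : Matrix (Fin d) (Fin d) ℂ) (v : Fin d → ℂ)
    (hv : ∀ i, star (v i) = v i) :
    (U * Matrix.diagonal v * star U)ᴴ = U * Matrix.diagonal v * star U := by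
  rw [← Matrix.star_eq_conjTranspose, StarMul.star_mul, StarMul.star_mul, star_star,
    Matrix.star_eq_conjTranspose (Matrix.diagonal v), Matrix.diagonal_conjTranspose]
  have : star v = v := funext hv
  rw [this, Matrix.mul_assoc]

lemma conjd_trace {d : ℕ} (U : Matrix (Fin d) (Fin d) ℂ) (hU2 : star U * U = 1)
    (v : Fin d → ℂ) :
    (U * Matrix.diagonal v * star U).trace = ∑ i, v i := by
  rw [Matrix.trace_mul_comm (U * Matrix.diagonal v) (star U), ← Matrix.mul_assoc,
    hU2, one_mul, Matrix.trace_diagonal]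

lemma conjd_psd {d : ℕ} (U : Matrix (Fin d) (Fin d) ℂ) (v : Fin d → ℝ)
    (hv : ∀ i, 0 ≤ v i) :
    (U * Matrix.diagonal (fun i => (v i : ℂ)) * star U).PosSemidef := by
  have hD : (Matrix.diagonal (fun i => (v i : ℂ))).PosSemidef :=
    Matrix.posSemidef_diagonal_iff.mpr fun i => Complex.zero_le_real.mpr (hv i)
  have := hD.mul_mul_conjTranspose_same U
  rwa [← Matrix.star_eq_conjTranspose] at this

lemma conjd_congr {d : ℕ} (U : Matrix (Fin d) (Fin d) ℂ) {v w : Fin d → ℂ}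
    (h : ∀ i, v i = w i) :
    U * Matrix.diagonal v * star U = U * Matrix.diagonal w * star U := by
  rw [show v = w from funext h]

lemma exists_proj {d : ℕ} (Δ : Matrix (Fin d) (Fin d) ℂ) (hΔ : Δ.IsHermitian)
    (htr : Δ.trace = 0) :
    ∃ P : Matrix (Fin d) (Fin d) ℂ, Pᴴ = P ∧ P * P = P ∧ (1 - P)ᴴ = 1 - P ∧
      (1 - P) * (1 - P) = 1 - P ∧
      (1/2) * (((Matrix.posSemidef_conjTranspose_mul_self Δ).sqrt.trace).re)
        = ((P * Δ).trace).re := by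
  have hU2 : star (hΔ.eigenvectorUnitary : Matrix (Fin d) (Fin d) ℂ)
      * (hΔ.eigenvectorUnitary : Matrix (Fin d) (Fin d) ℂ) = 1 :=
    Matrix.mem_unitaryGroup_iff'.mp hΔ.eigenvectorUnitary.2
  have hU1 : (hΔ.eigenvectorUnitary : Matrix (Fin d) (Fin d) ℂ)
      * star (hΔ.eigenvectorUnitary : Matrix (Fin d) (Fin d) ℂ) = 1 :=
    Matrix.mem_unitaryGroup_iff.mp hΔ.eigenvectorUnitary.2
  set U : Matrix (Fin d) (Fin d) ℂ := (hΔ.eigenvectorUnitary : Matrix (Fin d) (Fin d) ℂ)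
  set ev : Fin d → ℝ := hΔ.eigenvalues with hev
  have hId : U * Matrix.diagonal (fun i => ((ev i : ℝ) : ℂ)) * star U = Δ := by
    have := hΔ.spectral_theorem
    rw [this]
    rfl
  set P : Matrix (Fin d) (Fin d) ℂ :=
    U * Matrix.diagonal (fun i => (((if 0 < ev i then (1:ℝ) else 0) : ℝ) : ℂ)) * star U with hP
  have hPherm : Pᴴ = P := conjd_herm U _ fun i => by
    simp [RCLike.star_def, Complex.conj_ofReal]
  have hPP : P * P = P := by
    rw [hP, conjd_mul U hU2]
    exact conjd_congr U fun i => by by_cases h : 0 < ev i <;> simp [h]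
  have habs : U * Matrix.diagonal (fun i => ((|ev i| : ℝ) : ℂ)) * star U
      = (Matrix.posSemidef_conjTranspose_mul_self Δ).sqrt := by
    apply Matrix.PosSemidef.eq_sqrt_of_sq_eq (conjd_psd U _ fun i => abs_nonneg _)
    rw [pow_two, conjd_mul U hU2]
    have h2 : (U * Matrix.diagonal (fun i => ((ev i : ℝ) : ℂ)) * star U)
        * (U * Matrix.diagonal (fun i => ((ev i : ℝ) : ℂ)) * star U) = Δᴴ * Δ := by
      rw [hId, hΔ.eq]
    rw [← h2, conjd_mul U hU2]
    exact conjd_congr U fun i => by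
      rw [← Complex.ofReal_mul, ← Complex.ofReal_mul, abs_mul_abs_self]
  have htrabs : (((Matrix.posSemidef_conjTranspose_mul_self Δ).sqrt.trace)).re
      = ∑ i, |ev i| := by
    rw [← habs, conjd_trace U hU2, ← Complex.ofReal_sum, Complex.ofReal_re]
  have hsum0 : ∑ i, ev i = 0 := by
    have h0 := htr
    rw [← hId, conjd_trace U hU2, ← Complex.ofReal_sum] at h0
    exact_mod_cast h0
  have hPΔ : ((P * Δ).trace).re = ∑ i, (if 0 < ev i then (1:ℝ) else 0) * ev i := by
    rw [hP, ← hId, conjd_mul U hU2]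
    rw [show (fun i => (((if 0 < ev i then (1:ℝ) else 0) : ℝ) : ℂ) * ((ev i : ℝ) : ℂ))
        = (fun i => (((if 0 < ev i then (1:ℝ) else 0) * ev i : ℝ) : ℂ)) from
      funext fun i => (Complex.ofReal_mul _ _).symm]
    rw [conjd_trace U hU2, ← Complex.ofReal_sum, Complex.ofReal_re]
  refine ⟨P, hPherm, hPP, ?_, ?_, ?_⟩
  · rw [Matrix.conjTranspose_sub, Matrix.conjTranspose_one, hPherm]
  · rw [mul_sub, mul_one, sub_mul, one_mul, hPP, sub_self, sub_zero]
  · rw [htrabs, hPΔ]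
    have hpt : ∀ x : ℝ, |x| = 2 * ((if 0 < x then (1:ℝ) else 0) * x) - x := by
      intro x
      by_cases h : 0 < x
      · rw [if_pos h, abs_of_pos h]; ring
      · rw [if_neg h, abs_of_nonpos (le_of_not_gt h)]; ring
    calc (1/2) * ∑ i, |ev i|
        = (1/2) * ∑ i, (2 * ((if 0 < ev i then (1:ℝ) else 0) * ev i) - ev i) := by
          rw [Finset.sum_congr rfl fun i _ => hpt (ev i)]
      _ = ∑ i, (if 0 < ev i then (1:ℝ) else 0) * ev i := by
          rw [Finset.sum_sub_distrib, ← Finset.mul_sum, hsum0]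
          ring

lemma eigenvalues_le_one {d : ℕ} (Λ : Matrix (Fin d) (Fin d) ℂ) (hΛ : Λ.PosSemidef)
    (hΛI : ((1 : Matrix (Fin d) (Fin d) ℂ) - Λ).PosSemidef) (i : Fin d) :
    hΛ.1.eigenvalues i ≤ 1 := by
  have hnorm : (inner ℂ (hΛ.1.eigenvectorBasis i) (hΛ.1.eigenvectorBasis i) : ℂ) = 1 := by
    rw [inner_self_eq_norm_sq_to_K, hΛ.1.eigenvectorBasis.orthonormal.1 i]
    norm_num
  have hdot : dotProduct (star ⇑(hΛ.1.eigenvectorBasis i)) ⇑(hΛ.1.eigenvectorBasis i)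
      = 1 := by
    rw [← hnorm, EuclideanSpace.inner_eq_star_dotProduct, dotProduct_comm]
  have hmv := hΛ.1.mulVec_eigenvectorBasis i
  have h := hΛI.dotProduct_mulVec_nonneg ⇑(hΛ.1.eigenvectorBasis i)
  rw [Matrix.sub_mulVec, Matrix.one_mulVec, hmv, dotProduct_sub,
    dotProduct_smul, hdot] at h
  have h2 : (0:ℂ) ≤ 1 - (hΛ.1.eigenvalues i : ℂ) := by
    simpa [Complex.real_smul] using h
  have h3 : ((1 - hΛ.1.eigenvalues i : ℝ) : ℂ) = 1 - (hΛ.1.eigenvalues i : ℂ) := by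
    push_cast; ring
  rw [← h3, Complex.zero_le_real] at h2
  linarith

lemma sqrt_sub_psd {d : ℕ} (Λ : Matrix (Fin d) (Fin d) ℂ) (hΛ : Λ.PosSemidef)
    (hΛI : ((1 : Matrix (Fin d) (Fin d) ℂ) - Λ).PosSemidef) :
    (hΛ.sqrt - Λ).PosSemidef := by
  have hU2 : star (hΛ.1.eigenvectorUnitary : Matrix (Fin d) (Fin d) ℂ)
      * (hΛ.1.eigenvectorUnitary : Matrix (Fin d) (Fin d) ℂ) = 1 :=
    Matrix.mem_unitaryGroup_iff'.mp hΛ.1.eigenvectorUnitary.2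
  set U : Matrix (Fin d) (Fin d) ℂ := (hΛ.1.eigenvectorUnitary : Matrix (Fin d) (Fin d) ℂ)
  set ev : Fin d → ℝ := hΛ.1.eigenvalues with hev
  have hsq : hΛ.sqrt = U * Matrix.diagonal (fun i => ((Real.sqrt (ev i) : ℝ) : ℂ)) * star U := by
    rfl
  have hspec : Λ = U * Matrix.diagonal (fun i => ((ev i : ℝ) : ℂ)) * star U := by
    have := hΛ.1.spectral_theorem
    rw [this]
    rfl
  have hdiff : hΛ.sqrt - Λ
      = U * Matrix.diagonal (fun i => ((Real.sqrt (ev i) - ev i : ℝ) : ℂ)) * star U := by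
    rw [hsq]
    conv_lhs => rw [hspec]
    rw [← Matrix.sub_mul, ← Matrix.mul_sub, Matrix.diagonal_sub]
    congr 2
    funext i
    push_cast
    ring
  rw [hdiff]
  exact conjd_psd U _ fun i => by
    have h0 := hΛ.eigenvalues_nonneg i
    have h1 := eigenvalues_le_one Λ hΛ hΛI i
    have hs0 := Real.sqrt_nonneg (ev i)
    have hs1 : Real.sqrt (ev i) ≤ 1 := Real.sqrt_le_one.mpr h1
    nlinarith [Real.sq_sqrt h0]

lemma proj_form {d : ℕ} {P B C : Matrix (Fin d) (Fin d) ℂ} (hPH : Pᴴ = P) (hPP : P * P = P) :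
    (P * B)ᴴ * (P * C) = Bᴴ * (P * C) := by
  rw [Matrix.conjTranspose_mul, Matrix.mul_assoc, hPH, ← Matrix.mul_assoc P P C, hPP]

lemma trace_sandwich {d : ℕ} {M R ρ' : Matrix (Fin d) (Fin d) ℂ} (hM : M.PosSemidef)
    (hR : Rᴴ = R) (hRR : R * R = ρ') :
    ((hM.sqrt * R)ᴴ * (hM.sqrt * R)).trace = (M * ρ').trace := by
  rw [Matrix.conjTranspose_mul, hR, hM.posSemidef_sqrt.1,
    Matrix.mul_assoc, ← Matrix.mul_assoc hM.sqrt hM.sqrt R, hM.sqrt_mul_self,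
    Matrix.trace_mul_comm, Matrix.mul_assoc, hRR]

lemma trace_re_nonneg_of_psd {d : ℕ} {M ρ' R : Matrix (Fin d) (Fin d) ℂ} (hM : M.PosSemidef)
    (hR : Rᴴ = R) (hRR : R * R = ρ') :
    0 ≤ ((M * ρ').trace).re ∧ ((M * ρ').trace).im = 0 := by
  rw [← trace_sandwich hM hR hRR]
  exact ⟨trace_form_re_nonneg _, trace_form_im _⟩



set_option maxHeartbeats 1000000 in
/-- Gentle measurement / almost-as-good-as-new lemma.
For a density matrix `ρ` and a measurement operator `0 ≤ Λ ≤ I` with `tr(Λρ) > 0`,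
`‖ρ − √Λ ρ √Λ / tr(Λρ)‖_tr ≤ √(tr((I−Λ)ρ))`. -/
theorem stmt_2 {d : ℕ} (ρ Λ : Matrix (Fin d) (Fin d) ℂ)
    (hρ : ρ.PosSemidef) (hρtr : ρ.trace = 1)
    (hΛ : Λ.PosSemidef) (hΛI : ((1 : Matrix (Fin d) (Fin d) ℂ) - Λ).PosSemidef)
    (hpos : 0 < ((Λ * ρ).trace).re) :
    traceDist ρ (((Λ * ρ).trace)⁻¹ • (hΛ.sqrt * ρ * hΛ.sqrt)) ≤
      Real.sqrt (((((1 : Matrix (Fin d) (Fin d) ℂ) - Λ) * ρ).trace).re) := by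
  have hRH : hρ.sqrtᴴ = hρ.sqrt := hρ.posSemidef_sqrt.1
  have hXH : hΛ.sqrtᴴ = hΛ.sqrt := hΛ.posSemidef_sqrt.1
  have hRR : hρ.sqrt * hρ.sqrt = ρ := hρ.sqrt_mul_self
  have hXX : hΛ.sqrt * hΛ.sqrt = Λ := hΛ.sqrt_mul_self
  set R : Matrix (Fin d) (Fin d) ℂ := hρ.sqrt with hRdef
  set X : Matrix (Fin d) (Fin d) ℂ := hΛ.sqrt with hXdef
  set q : ℝ := ((Λ * ρ).trace).re with hqdef
  have hq0 : 0 < q := hpos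
  have hqim : ((Λ * ρ).trace).im = 0 := (trace_re_nonneg_of_psd hΛ hRH hRR).2
  have hpc : (Λ * ρ).trace = (q : ℂ) := Complex.ext rfl (by simpa using hqim)
  have hqc0 : ((q : ℝ) : ℂ) ≠ 0 := Complex.ofReal_ne_zero.mpr hq0.ne'
  set ε : ℝ := ((((1 : Matrix (Fin d) (Fin d) ℂ) - Λ) * ρ).trace).re with hεdef
  have hεtrace : (((1 : Matrix (Fin d) (Fin d) ℂ) - Λ) * ρ).trace = ρ.trace - (Λ * ρ).trace := by
    rw [Matrix.sub_mul, Matrix.one_mul, Matrix.trace_sub]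
  have hε : ε = 1 - q := by
    rw [hεdef, hεtrace, hρtr, Complex.sub_re, hqdef, Complex.one_re]
  have hXρX : (X * ρ * X).trace = (q : ℂ) := by
    rw [Matrix.trace_mul_comm (X * ρ) X, ← Matrix.mul_assoc, hXX, hpc]
  rw [hpc]
  set σ : Matrix (Fin d) (Fin d) ℂ := ((q : ℝ) : ℂ)⁻¹ • (X * ρ * X) with hσdef
  have hσH : σᴴ = σ := by
    rw [hσdef, Matrix.conjTranspose_smul, Matrix.conjTranspose_mul, Matrix.conjTranspose_mul,
      hXH, hρ.1]
    refine congrArg₂ (· • ·) ?_ ?_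
    · simp [← Complex.ofReal_inv, Complex.conj_ofReal]
    · rw [Matrix.mul_assoc]
  have hΔH : (ρ - σ).IsHermitian := hρ.1.sub hσH
  have htrΔ : (ρ - σ).trace = 0 := by
    rw [Matrix.trace_sub, hρtr, hσdef, Matrix.trace_smul, hXρX, smul_eq_mul,
      inv_mul_cancel₀ hqc0, sub_self]
  obtain ⟨P, hPH, hPP, hQH, hQQ, hhalf⟩ := exists_proj (ρ - σ) hΔH htrΔ
  unfold traceDist
  rw [hhalf]
  have hXRRX : (X * R) * (R * X) = X * ρ * X := by
    rw [Matrix.mul_assoc X R (R * X), ← Matrix.mul_assoc R R X, hRR, ← Matrix.mul_assoc]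
  have eqA : ((P * R)ᴴ * (P * R)).trace = (P * ρ).trace := by
    rw [proj_form hPH hPP, hRH, Matrix.trace_mul_comm, Matrix.mul_assoc, hRR]
  have eqA' : (((1 - P) * R)ᴴ * ((1 - P) * R)).trace = ρ.trace - (P * ρ).trace := by
    rw [proj_form hQH hQQ, hRH, Matrix.trace_mul_comm, Matrix.mul_assoc, hRR,
      Matrix.sub_mul, Matrix.one_mul, Matrix.trace_sub]
  have eqB : ((P * (X * R))ᴴ * (P * (X * R))).trace = (P * (X * ρ * X)).trace := by
    rw [proj_form hPH hPP, Matrix.conjTranspose_mul, hRH, hXH, Matrix.trace_mul_comm,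
      Matrix.mul_assoc P (X * R) (R * X), hXRRX]
  have eqB' : (((1 - P) * (X * R))ᴴ * ((1 - P) * (X * R))).trace
      = (X * ρ * X).trace - (P * (X * ρ * X)).trace := by
    rw [proj_form hQH hQQ, Matrix.conjTranspose_mul, hRH, hXH, Matrix.trace_mul_comm,
      Matrix.mul_assoc (1 - P) (X * R) (R * X), hXRRX, Matrix.sub_mul, Matrix.one_mul,
      Matrix.trace_sub]
  have eqC : ((P * R)ᴴ * (P * (X * R))).trace = (R * (P * (X * R))).trace := by
    rw [proj_form hPH hPP, hRH]
  have eqC' : (((1 - P) * R)ᴴ * ((1 - P) * (X * R))).trace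
      = (R * (X * R)).trace - (R * (P * (X * R))).trace := by
    rw [proj_form hQH hQQ, hRH, Matrix.sub_mul, Matrix.one_mul, Matrix.mul_sub,
      Matrix.trace_sub]
  set A : ℝ := ((P * ρ).trace).re with hAdef
  set B : ℝ := ((P * (X * ρ * X)).trace).re with hBdef
  set Cz : ℂ := (R * (P * (X * R))).trace with hCzdef
  set cC : ℂ := (R * (X * R)).trace with hcCdef
  have hcXρ : cC = (X * ρ).trace := by
    rw [hcCdef, Matrix.trace_mul_comm, Matrix.mul_assoc, hRR]
  have hXpsd : X.PosSemidef := hΛ.posSemidef_sqrt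
  have hcim : cC.im = 0 := by rw [hcXρ]; exact (trace_re_nonneg_of_psd hXpsd hRH hRR).2
  have hc_ge : q ≤ cC.re := by
    have hdiffpsd : (X - Λ).PosSemidef := sqrt_sub_psd Λ hΛ hΛI
    have h0 := (trace_re_nonneg_of_psd hdiffpsd hRH hRR).1
    have h1 : ((X - Λ) * ρ).trace = (X * ρ).trace - (Λ * ρ).trace := by
      rw [Matrix.sub_mul, Matrix.trace_sub]
    rw [h1, Complex.sub_re, ← hcXρ, hpc, Complex.ofReal_re] at h0
    linarith
  have hc0 : 0 ≤ cC.re := le_trans hq0.le hc_ge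
  have hc_sq : cC.re ^ 2 ≤ q := by
    have CS0 := trace_CS R (X * R)
    rw [hRH, hRR] at CS0
    have h3 : ((X * R)ᴴ * (X * R)).trace = (q : ℂ) := by
      have h4 := trace_sandwich hΛ hRH hRR
      rw [h4, hpc]
    rw [h3, hρtr, ← hcCdef] at CS0
    simp only [Complex.one_re, Complex.ofReal_re, one_mul] at CS0
    nlinarith [sq_nonneg cC.im]
  have CS1 := trace_CS (P * R) (P * (X * R))
  rw [eqA, eqB, eqC] at CS1
  have CS2 := trace_CS ((1 - P) * R) ((1 - P) * (X * R))
  rw [eqA', eqB', eqC', hρtr, hXρX] at CS2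
  have hA0 : 0 ≤ A := by
    have h := trace_form_re_nonneg (P * R)
    rw [eqA] at h; exact h
  have hB0 : 0 ≤ B := by
    have h := trace_form_re_nonneg (P * (X * R))
    rw [eqB] at h; exact h
  have hA1 : A ≤ 1 := by
    have h := trace_form_re_nonneg ((1 - P) * R)
    rw [eqA', hρtr] at h
    simp only [Complex.sub_re, Complex.one_re] at h
    linarith
  have hB1 : B ≤ q := by
    have h := trace_form_re_nonneg ((1 - P) * (X * R))
    rw [eqB', hXρX] at h
    simp only [Complex.sub_re, Complex.ofReal_re] at h
    linarith
  have hCS1 : Cz.re ^ 2 + Cz.im ^ 2 ≤ A * B := CS1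
  have hCS2 : (cC.re - Cz.re) ^ 2 + Cz.im ^ 2 ≤ (1 - A) * (q - B) := by
    have h := CS2
    simp only [Complex.sub_re, Complex.sub_im, Complex.one_re, Complex.one_im,
      Complex.ofReal_re, Complex.ofReal_im, hcim] at h
    calc (cC.re - Cz.re) ^ 2 + Cz.im ^ 2
        = (cC.re - Cz.re) ^ 2 + (0 - Cz.im) ^ 2 := by ring_nf
      _ ≤ (1 - A) * (q - B) := h
  have hexp : ((P * (ρ - σ)).trace).re = A - q⁻¹ * B := by
    rw [Matrix.mul_sub, Matrix.trace_sub, hσdef, Matrix.mul_smul, Matrix.trace_smul,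
      smul_eq_mul, ← Complex.ofReal_inv, Complex.sub_re, Complex.re_ofReal_mul]
  rw [hexp]
  set s : ℝ := Real.sqrt q with hsdef
  have hs0 : 0 < s := Real.sqrt_pos.mpr hq0
  have hs2 : s ^ 2 = q := Real.sq_sqrt hq0.le
  refine key_scalar A (q⁻¹ * B) (cC.re / s) (Cz.re / s) (Cz.im / s) ε hA0 hA1 ?_ ?_ ?_ ?_ ?_ ?_
  · positivity
  · rw [inv_mul_le_iff₀ hq0, mul_one]; exact hB1
  · positivity
  · have e1 : (Cz.re / s) ^ 2 + (Cz.im / s) ^ 2 = (Cz.re ^ 2 + Cz.im ^ 2) / q := by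
      rw [div_pow, div_pow, hs2, ← add_div]
    have e2 : A * (q⁻¹ * B) = (A * B) / q := by ring
    rw [e1, e2]
    gcongr
  · have e1 : (cC.re / s - Cz.re / s) ^ 2 + (Cz.im / s) ^ 2
        = ((cC.re - Cz.re) ^ 2 + Cz.im ^ 2) / q := by
      rw [div_sub_div_same, div_pow, div_pow, hs2, ← add_div]
    have e2 : (1 - A) * (1 - q⁻¹ * B) = ((1 - A) * (q - B)) / q := by
      field_simp
    rw [e1, e2]
    gcongr
  · have e1 : (cC.re / s) ^ 2 = cC.re ^ 2 / q := by rw [div_pow, hs2]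
    have e2 : q ^ 2 / q ≤ cC.re ^ 2 / q := by
      gcongr
    have e3 : q ^ 2 / q = q := by field_simp [pow_two]
    rw [e1]
    rw [e3] at e2
    linarith [hε]
end

section
/- Let Λ_1, …, Λ_n be orthogonal projections on ℂ^d, let Λ := (1/n) Σ_{j=1}^n Λ_j, let ρ be a density matrix on ℂ^d, let 0 < ε < 1, and set N := ⌈ n/(1−ε) ⌉. Let Q denote the orthogonal projection onto the span of the eigenvectors of Λ with eigenvalue at least 1/(2N). If there exists an index i with tr(Λ_i ρ) ≥ 1−ε, then tr(Q ρ) ≥ (1−ε)²/4. -/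
open Matrix
open scoped ComplexOrder BigOperators

section Auxiliary

variable {d : ℕ}

private lemma diag_entry_nonneg {A : Matrix (Fin d) (Fin d) ℂ} (hA : A.PosSemidef) (i : Fin d) :
    0 ≤ A i i := by
  exact hA.diag_nonneg

private lemma trace_re_nonneg {A : Matrix (Fin d) (Fin d) ℂ} (hA : A.PosSemidef) :
    0 ≤ A.trace.re := by
  rw [Matrix.trace, Complex.re_sum]
  exact Finset.sum_nonneg fun i _ => (Complex.le_def.mp (diag_entry_nonneg hA i)).1

private lemma trace_mul_re_nonneg {A B : Matrix (Fin d) (Fin d) ℂ} (hA : A.PosSemidef)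
    (hB : B.PosSemidef) : 0 ≤ (A * B).trace.re := by
  open scoped MatrixOrder in
  have h1 : A * B = A * (CFC.sqrt B * CFC.sqrt B) := by rw [CFC.sqrt_mul_sqrt_self B hB.nonneg]
  have h2 : (A * (CFC.sqrt B * CFC.sqrt B)).trace = (CFC.sqrt B * A * CFC.sqrt B).trace := by
    rw [← Matrix.mul_assoc, Matrix.trace_mul_cycle]
  open scoped MatrixOrder in
  have h3 : (CFC.sqrt B * A * CFC.sqrt B).PosSemidef := by
    have := hA.conjTranspose_mul_mul_same (B := CFC.sqrt B)
    rwa [(CFC.sqrt_nonneg B).posSemidef.isHermitian.eq] at this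
  rw [h1, h2]
  exact trace_re_nonneg h3

private lemma trace_mul_re_mono {A B C : Matrix (Fin d) (Fin d) ℂ} (hAB : (B - A).PosSemidef)
    (hC : C.PosSemidef) : (A * C).trace.re ≤ (B * C).trace.re := by
  have := trace_mul_re_nonneg hAB hC
  rw [Matrix.sub_mul, Matrix.trace_sub, Complex.sub_re] at this
  linarith

private lemma re_star_mul_self (z : ℂ) : (star z * z).re = ‖z‖ ^ 2 := by
  simp [Complex.star_def, ← Complex.normSq_eq_conj_mul_self, Complex.normSq_eq_norm_sq,
    ← Complex.ofReal_pow]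

private lemma trace_conjTranspose_mul_self_re (A : Matrix (Fin d) (Fin d) ℂ) :
    (Aᴴ * A).trace.re = ∑ p : Fin d × Fin d, ‖A p.1 p.2‖ ^ 2 := by
  rw [Matrix.trace, Complex.re_sum, Fintype.sum_prod_type, Finset.sum_comm]
  refine Finset.sum_congr rfl fun i _ => ?_
  simp only [Matrix.diag_apply, Matrix.mul_apply, Matrix.conjTranspose_apply, Complex.re_sum]
  exact Finset.sum_congr rfl fun j _ => re_star_mul_self _

private lemma trace_cs (A B : Matrix (Fin d) (Fin d) ℂ) :
    (Aᴴ * B).trace.re ≤ Real.sqrt ((Aᴴ * A).trace.re) * Real.sqrt ((Bᴴ * B).trace.re) := by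
  classical
  let x : EuclideanSpace ℂ (Fin d × Fin d) := WithLp.toLp 2 fun p : Fin d × Fin d => A p.1 p.2
  let y : EuclideanSpace ℂ (Fin d × Fin d) := WithLp.toLp 2 fun p : Fin d × Fin d => B p.1 p.2
  have hinner : inner (𝕜 := ℂ) x y = (Aᴴ * B).trace := by
    simp only [PiLp.inner_apply, RCLike.inner_apply, Matrix.trace]
    rw [Fintype.sum_prod_type, Finset.sum_comm]
    refine Finset.sum_congr rfl fun i _ => ?_
    simp only [Matrix.diag_apply, Matrix.mul_apply, Matrix.conjTranspose_apply, x, y]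
    exact Finset.sum_congr rfl fun j _ => mul_comm _ _
  have h1 : (Aᴴ * B).trace.re ≤ ‖inner (𝕜 := ℂ) x y‖ := by
    rw [hinner]
    exact Complex.re_le_norm _
  have h2 : ‖inner (𝕜 := ℂ) x y‖ ≤ ‖x‖ * ‖y‖ := norm_inner_le_norm x y
  have hx : ‖x‖ = Real.sqrt ((Aᴴ * A).trace.re) := by
    rw [EuclideanSpace.norm_eq, trace_conjTranspose_mul_self_re]
  have hy : ‖y‖ = Real.sqrt ((Bᴴ * B).trace.re) := by
    rw [EuclideanSpace.norm_eq, trace_conjTranspose_mul_self_re]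
  calc (Aᴴ * B).trace.re ≤ ‖x‖ * ‖y‖ := h1.trans h2
    _ = _ := by rw [hx, hy]

private lemma sandwich_trace {C X ρ' : Matrix (Fin d) (Fin d) ℂ} (hC2 : C * C = C)
    (hCH : Cᴴ = C) (hXH : Xᴴ = X) (hXX : X * X = ρ') :
    ((C * X)ᴴ * (C * X)).trace = (C * ρ').trace := by
  have e : (C * X)ᴴ * (C * X) = X * (C * X) := by
    rw [Matrix.conjTranspose_mul, hXH, hCH, Matrix.mul_assoc, ← Matrix.mul_assoc C C X, hC2]
  rw [e, Matrix.trace_mul_comm, Matrix.mul_assoc, hXX]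

end Auxiliary

section Spectral

variable {d : ℕ}

private lemma uconj_mul {U : Matrix (Fin d) (Fin d) ℂ} (hU : Uᴴ * U = 1)
    (f g : Fin d → ℂ) :
    (U * Matrix.diagonal f * Uᴴ) * (U * Matrix.diagonal g * Uᴴ) =
      U * Matrix.diagonal (fun i => f i * g i) * Uᴴ := by
  calc (U * Matrix.diagonal f * Uᴴ) * (U * Matrix.diagonal g * Uᴴ)
      = U * (Matrix.diagonal f * (Uᴴ * U) * Matrix.diagonal g) * Uᴴ := by
        simp only [Matrix.mul_assoc]
    _ = U * Matrix.diagonal (fun i => f i * g i) * Uᴴ := by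
        rw [hU, Matrix.mul_one, Matrix.diagonal_mul_diagonal]

private lemma key_general {U : Matrix (Fin d) (Fin d) ℂ} (hU : Uᴴ * U = 1) (hU2 : U * Uᴴ = 1)
    (ev : Fin d → ℝ) (δ : ℝ) :
    ((δ : ℂ) • (1 - U * Matrix.diagonal (fun i => if δ ≤ ev i then (1:ℂ) else 0) * Uᴴ) -
      (1 - U * Matrix.diagonal (fun i => if δ ≤ ev i then (1:ℂ) else 0) * Uᴴ) *
        (U * Matrix.diagonal (fun i => (ev i : ℂ)) * Uᴴ) *
      (1 - U * Matrix.diagonal (fun i => if δ ≤ ev i then (1:ℂ) else 0) * Uᴴ)).PosSemidef := by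
  have hone : (1 : Matrix (Fin d) (Fin d) ℂ) = U * Matrix.diagonal (fun _ => (1:ℂ)) * Uᴴ := by
    rw [Matrix.diagonal_one, Matrix.mul_one, hU2]
  have hP : (1 : Matrix (Fin d) (Fin d) ℂ) -
      U * Matrix.diagonal (fun i => if δ ≤ ev i then (1:ℂ) else 0) * Uᴴ =
      U * Matrix.diagonal (fun i => 1 - if δ ≤ ev i then (1:ℂ) else 0) * Uᴴ := by
    conv_lhs => rw [hone]
    rw [← Matrix.diagonal_sub, ← Matrix.sub_mul, ← Matrix.mul_sub]
  rw [hP, uconj_mul hU, uconj_mul hU]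
  have hsmul : (δ : ℂ) • (U * Matrix.diagonal (fun i => 1 - if δ ≤ ev i then (1:ℂ) else 0) * Uᴴ) =
      U * Matrix.diagonal (fun i => (δ:ℂ) * (1 - if δ ≤ ev i then (1:ℂ) else 0)) * Uᴴ := by
    rw [← smul_mul_assoc, ← mul_smul_comm]
    congr 2
    rw [← Matrix.diagonal_smul]
    exact congrArg Matrix.diagonal (funext fun i => by simp [smul_eq_mul])
  rw [hsmul, ← Matrix.sub_mul, ← Matrix.mul_sub, Matrix.diagonal_sub]
  apply Matrix.PosSemidef.mul_mul_conjTranspose_same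
  rw [Matrix.posSemidef_diagonal_iff]
  intro i
  by_cases h : δ ≤ ev i
  · simp [h]
  · have hlt : ev i < δ := not_le.mp h
    have : (δ:ℂ) * (1 - if δ ≤ ev i then (1:ℂ) else 0) -
        (1 - if δ ≤ ev i then (1:ℂ) else 0) * (ev i : ℂ) * (1 - if δ ≤ ev i then (1:ℂ) else 0)
        = ((δ - ev i : ℝ) : ℂ) := by
      rw [if_neg h]; push_cast; ring
    rw [this, Complex.zero_le_real]
    linarith

variable {M : Matrix (Fin d) (Fin d) ℂ} (hM : M.IsHermitian) (δ : ℝ)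

private lemma hUmul : ((hM.eigenvectorUnitary : Matrix (Fin d) (Fin d) ℂ))ᴴ *
    (hM.eigenvectorUnitary : Matrix (Fin d) (Fin d) ℂ) = 1 := by
  rw [← Matrix.star_eq_conjTranspose]
  exact Matrix.mem_unitaryGroup_iff'.mp hM.eigenvectorUnitary.2

private lemma hUmul2 : (hM.eigenvectorUnitary : Matrix (Fin d) (Fin d) ℂ) *
    ((hM.eigenvectorUnitary : Matrix (Fin d) (Fin d) ℂ))ᴴ = 1 := by
  rw [← Matrix.star_eq_conjTranspose]
  exact Matrix.mem_unitaryGroup_iff.mp hM.eigenvectorUnitary.2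

private lemma specProj_conjTranspose : (specProj hM δ)ᴴ = specProj hM δ := by
  unfold specProj
  rw [Matrix.conjTranspose_mul, Matrix.conjTranspose_mul, Matrix.conjTranspose_conjTranspose,
    Matrix.diagonal_conjTranspose]
  simp only [Matrix.mul_assoc]
  congr 1
  congr 1
  exact congrArg Matrix.diagonal (funext fun i => by
    simp only [Pi.star_apply]
    split_ifs <;> simp)

private lemma specProj_idem : specProj hM δ * specProj hM δ = specProj hM δ := by
  unfold specProj
  rw [uconj_mul (hUmul hM)]
  congr 1
  congr 1
  exact congrArg Matrix.diagonal (funext fun i => by split_ifs <;> simp)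

private lemma specProj_compl_key :
    ((δ : ℂ) • (1 - specProj hM δ) -
      (1 - specProj hM δ) * M * (1 - specProj hM δ)).PosSemidef := by
  have hMspec : M = (hM.eigenvectorUnitary : Matrix (Fin d) (Fin d) ℂ) *
      Matrix.diagonal (fun i => (hM.eigenvalues i : ℂ)) *
      ((hM.eigenvectorUnitary : Matrix (Fin d) (Fin d) ℂ))ᴴ := by
    have := hM.spectral_theorem
    rw [Unitary.conjStarAlgAut_apply, Matrix.star_eq_conjTranspose] at this
    exact this
  have e : (δ : ℂ) • (1 - specProj hM δ) -
      (1 - specProj hM δ) * M * (1 - specProj hM δ) =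
      (δ : ℂ) • (1 - specProj hM δ) -
      (1 - specProj hM δ) * ((hM.eigenvectorUnitary : Matrix (Fin d) (Fin d) ℂ) *
        Matrix.diagonal (fun i => (hM.eigenvalues i : ℂ)) *
        ((hM.eigenvectorUnitary : Matrix (Fin d) (Fin d) ℂ))ᴴ) * (1 - specProj hM δ) := by
    rw [← hMspec]
  rw [e]
  exact key_general (hUmul hM) (hUmul2 hM) hM.eigenvalues δ

end Spectral

set_option maxHeartbeats 1000000 in
private lemma endgame {t τ s r c : ℝ} (ht0 : 0 < t) (ht1 : t ≤ 1) (hτ1 : τ ≤ 1)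
    (hτt : t ≤ τ) (hs0 : 0 ≤ s) (hs1 : s ≤ 1) (hr0 : 0 ≤ r) (hrτ : r ≤ τ)
    (hrc : r ≤ c * τ) (hc0 : 0 ≤ c) (hc : c ≤ t / 2)
    (hstar : τ ≤ Real.sqrt s * Real.sqrt (τ - r) + Real.sqrt (1 - s) * Real.sqrt r) :
    t ^ 2 / 4 ≤ s := by
  have hτ0 : (0:ℝ) < τ := lt_of_lt_of_le ht0 hτt
  set a := Real.sqrt s with ha
  set b := Real.sqrt (1 - s) with hb
  set A := Real.sqrt (τ - r) with hA
  set B := Real.sqrt r with hB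
  set T := Real.sqrt τ with hT
  set S := Real.sqrt (1 - τ) with hS
  have ha0 : 0 ≤ a := Real.sqrt_nonneg _
  have hb0 : 0 ≤ b := Real.sqrt_nonneg _
  have hA0 : 0 ≤ A := Real.sqrt_nonneg _
  have hB0 : 0 ≤ B := Real.sqrt_nonneg _
  have hT0 : 0 < T := Real.sqrt_pos.mpr hτ0
  have hS0 : 0 ≤ S := Real.sqrt_nonneg _
  have ha2 : a ^ 2 = s := Real.sq_sqrt hs0
  have hb2 : b ^ 2 = 1 - s := Real.sq_sqrt (by linarith)
  have hA2 : A ^ 2 = τ - r := Real.sq_sqrt (by linarith)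
  have hB2 : B ^ 2 = r := Real.sq_sqrt hr0
  have hT2 : T ^ 2 = τ := Real.sq_sqrt (le_of_lt hτ0)
  have hS2 : S ^ 2 = 1 - τ := Real.sq_sqrt (by linarith)
  have step1 : T * A - B * S ≤ T * a := by
    rcases le_or_gt τ (a * A) with hcase | hcase
    · have hAa : A ≤ a := by
        rcases le_or_gt A a with h | h
        · exact h
        · exfalso
          have hApos : 0 < A := lt_of_le_of_lt ha0 h
          nlinarith [hA2, hrτ, hcase]
      have h6 := mul_le_mul_of_nonneg_left hAa (le_of_lt hT0)
      have h7 := mul_nonneg hB0 hS0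
      linarith
    · have h2 : τ - a * A ≤ b * B := by linarith
      have h1 : 0 ≤ τ - a * A := le_of_lt (by linarith)
      have h3 : (τ - a * A) ^ 2 ≤ b ^ 2 * B ^ 2 := by
        have := pow_le_pow_left₀ h1 h2 2
        rwa [mul_pow] at this
      rcases le_or_gt A a with h | h
      · have h6 := mul_le_mul_of_nonneg_left h (le_of_lt hT0)
        have h7 := mul_nonneg hB0 hS0
        linarith
      · have h4 : τ ^ 2 - 2 * τ * (a * A) + a ^ 2 * τ ≤ r := by
          have e1 : (τ - a * A) ^ 2 = τ ^ 2 - 2 * τ * (a * A) + a ^ 2 * (τ - r) := by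
            linear_combination a ^ 2 * hA2
          have e2 : b ^ 2 * B ^ 2 = (1 - a ^ 2) * r := by
            rw [hb2, hB2, ha2]
          rw [e1, e2] at h3
          linarith
        have goal2 : τ * (A - a) ^ 2 ≤ r * (1 - τ) := by
          have e3 : τ * (A - a) ^ 2 = (τ ^ 2 - 2 * τ * (a * A) + a ^ 2 * τ) - τ * r := by
            linear_combination τ * hA2
          rw [e3]
          nlinarith [h4, hr0, hτ0]
        have hX : 0 ≤ T * (A - a) := mul_nonneg (le_of_lt hT0) (by linarith)
        have h5 : (T * (A - a)) ^ 2 ≤ (B * S) ^ 2 := by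
          calc (T * (A - a)) ^ 2 = τ * (A - a) ^ 2 := by rw [mul_pow, hT2]
            _ ≤ r * (1 - τ) := goal2
            _ = (B * S) ^ 2 := by rw [mul_pow, hB2, hS2]
        have hfin : T * (A - a) ≤ B * S := by
          have := Real.sqrt_le_sqrt h5
          rwa [Real.sqrt_sq hX, Real.sqrt_sq (mul_nonneg hB0 hS0)] at this
        linarith
  have hAlow : T * Real.sqrt (1 - c) ≤ A := by
    rw [hA, hT, ← Real.sqrt_mul (le_of_lt hτ0)]
    apply Real.sqrt_le_sqrt
    have : τ * (1 - c) = τ - c * τ := by ring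
    linarith
  have hBhigh : B ≤ Real.sqrt c * T := by
    rw [hB, hT, ← Real.sqrt_mul hc0]
    exact Real.sqrt_le_sqrt hrc
  have step2 : T * Real.sqrt (1 - c) - Real.sqrt c * S ≤ a := by
    have h4 : B * S ≤ Real.sqrt c * T * S := mul_le_mul_of_nonneg_right hBhigh hS0
    have h5 : T * (T * Real.sqrt (1 - c)) ≤ T * A :=
      mul_le_mul_of_nonneg_left hAlow (le_of_lt hT0)
    have h6 : T * (T * Real.sqrt (1 - c) - Real.sqrt c * S) ≤ T * a := by
      have : T * (T * Real.sqrt (1 - c) - Real.sqrt c * S)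
          = T * (T * Real.sqrt (1 - c)) - Real.sqrt c * T * S := by ring
      rw [this]
      linarith
    exact le_of_mul_le_mul_left h6 hT0
  have step3 : Real.sqrt t * Real.sqrt (1 - t / 2) - Real.sqrt (t / 2) * Real.sqrt (1 - t) ≤ a := by
    have hm1 : Real.sqrt t * Real.sqrt (1 - t / 2) ≤ T * Real.sqrt (1 - c) := by
      calc Real.sqrt t * Real.sqrt (1 - t / 2) ≤ T * Real.sqrt (1 - t / 2) :=
            mul_le_mul_of_nonneg_right (Real.sqrt_le_sqrt hτt) (Real.sqrt_nonneg _)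
        _ ≤ T * Real.sqrt (1 - c) :=
            mul_le_mul_of_nonneg_left (Real.sqrt_le_sqrt (by linarith)) (le_of_lt hT0)
    have hm2 : Real.sqrt c * S ≤ Real.sqrt (t / 2) * Real.sqrt (1 - t) :=
      mul_le_mul (Real.sqrt_le_sqrt hc) (Real.sqrt_le_sqrt (by linarith)) hS0
        (Real.sqrt_nonneg _)
    linarith
  have k1 : Real.sqrt (t / 2) * Real.sqrt (1 - t) ≤ 1 / 2 - t / 4 := by
    rw [← Real.sqrt_mul (by linarith)]
    rw [Real.sqrt_le_left (by linarith)]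
    nlinarith [sq_nonneg (1 / 2 - 3 * t / 4)]
  have k2 : t / 2 + Real.sqrt (t / 2) * Real.sqrt (1 - t) ≤ Real.sqrt t * Real.sqrt (1 - t / 2) := by
    rw [← Real.sqrt_mul (le_of_lt ht0)]
    rw [Real.le_sqrt (by positivity) (by nlinarith)]
    have hss : (Real.sqrt (t / 2) * Real.sqrt (1 - t)) ^ 2 = t / 2 * (1 - t) := by
      rw [← Real.sqrt_mul (by linarith)]
      exact Real.sq_sqrt (by nlinarith)
    nlinarith [hss, mul_le_mul_of_nonneg_left k1 (le_of_lt ht0), Real.sqrt_nonneg (t / 2),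
      Real.sqrt_nonneg (1 - t)]
  have hfin2 : t / 2 ≤ a := by linarith
  calc t ^ 2 / 4 = (t / 2) ^ 2 := by ring
    _ ≤ a ^ 2 := pow_le_pow_left₀ (by linarith) hfin2 2
    _ = s := ha2

set_option maxHeartbeats 1600000 in
theorem stmt_5 {d n : ℕ} (hn : 0 < n) (Λ : Fin n → Matrix (Fin d) (Fin d) ℂ)
    (hΛH : ∀ j, (Λ j).IsHermitian) (hΛ2 : ∀ j, Λ j * Λ j = Λ j)
    (ρ : Matrix (Fin d) (Fin d) ℂ) (hρ : ρ.PosSemidef) (hρtr : ρ.trace = 1)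
    (ε : ℝ) (hε0 : 0 < ε) (hε1 : ε < 1)
    (N : ℕ) (hN : N = ⌈(n : ℝ) / (1 - ε)⌉₊)
    (havg : ((((n : ℂ))⁻¹ • ∑ j, Λ j)).IsHermitian)
    (i : Fin n) (hi : 1 - ε ≤ ((Λ i * ρ).trace).re) :
    (1 - ε) ^ 2 / 4 ≤ ((specProj havg (1 / (2 * N)) * ρ).trace).re := by
  classical
  -- scalar setup
  set t : ℝ := 1 - ε with htdef
  have ht0 : 0 < t := by rw [htdef]; linarith
  have ht1 : t ≤ 1 := by rw [htdef]; linarith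
  set δr : ℝ := 1 / (2 * (N : ℝ)) with hδdef
  have hNceil : ((n : ℝ) / t) ≤ (N : ℝ) := by
    rw [hN]
    exact Nat.le_ceil _
  have hN1 : (1 : ℝ) ≤ (N : ℝ) := by
    have hpos : (0 : ℝ) < (n : ℝ) / t := by
      apply div_pos _ ht0
      exact_mod_cast hn
    have : 0 < N := by
      rw [hN]
      exact Nat.ceil_pos.mpr hpos
    exact_mod_cast this
  have hNpos : (0 : ℝ) < 2 * (N : ℝ) := by linarith
  have hδ0 : 0 < δr := by rw [hδdef]; positivity
  set c : ℝ := (n : ℝ) * δr with hcdef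
  have hc0 : 0 ≤ c := by
    rw [hcdef]
    positivity
  have hcle : c ≤ t / 2 := by
    have h1 : (n : ℝ) ≤ (N : ℝ) * t := (div_le_iff₀ ht0).mp hNceil
    have h2 : c = (n : ℝ) / (2 * (N : ℝ)) := by rw [hcdef, hδdef]; ring
    rw [h2, div_le_div_iff₀ hNpos (by norm_num : (0:ℝ) < 2)]
    nlinarith
  -- matrices
  set Aavg : Matrix (Fin d) (Fin d) ℂ := ((n : ℂ))⁻¹ • ∑ j, Λ j with hAdef
  set Q : Matrix (Fin d) (Fin d) ℂ := specProj havg δr with hQdef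
  set P : Matrix (Fin d) (Fin d) ℂ := 1 - Q with hPdef
  have hQH : Qᴴ = Q := specProj_conjTranspose havg δr
  have hQ2 : Q * Q = Q := specProj_idem havg δr
  have hkey : ((δr : ℂ) • P - P * Aavg * P).PosSemidef := specProj_compl_key havg δr
  have hPH : Pᴴ = P := by
    rw [hPdef, Matrix.conjTranspose_sub, Matrix.conjTranspose_one, hQH]
  have hP2 : P * P = P := by
    have e : (1 - Q) * (1 - Q) = 1 - Q - Q + Q * Q := by noncomm_ring
    rw [hPdef, e, hQ2]
    abel
  set L : Matrix (Fin d) (Fin d) ℂ := Λ i with hLdef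
  have hLH : Lᴴ = L := hΛH i
  have hL2 : L * L = L := hΛ2 i
  open scoped MatrixOrder in
  set X : Matrix (Fin d) (Fin d) ℂ := CFC.sqrt ρ with hXdef
  open scoped MatrixOrder in
  have hXH : Xᴴ = X := (CFC.sqrt_nonneg ρ).posSemidef.isHermitian
  open scoped MatrixOrder in
  have hXX : X * X = ρ := CFC.sqrt_mul_sqrt_self ρ hρ.nonneg
  -- PSD facts
  have hQpsd : Q.PosSemidef := by
    have := Matrix.posSemidef_conjTranspose_mul_self Q
    rwa [hQH, hQ2] at this
  have hPpsd : P.PosSemidef := by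
    have := Matrix.posSemidef_conjTranspose_mul_self P
    rwa [hPH, hP2] at this
  have hLpsd : L.PosSemidef := by
    have := Matrix.posSemidef_conjTranspose_mul_self L
    rwa [hLH, hL2] at this
  -- scalar quantities
  set s : ℝ := (Q * ρ).trace.re with hsdef
  set τ : ℝ := (L * ρ).trace.re with hτdef
  set g : Matrix (Fin d) (Fin d) ℂ := L * X with hgdef
  set Z : Matrix (Fin d) (Fin d) ℂ := P * g with hZdef
  set w : Matrix (Fin d) (Fin d) ℂ := Q * g with hwdef
  set qx : Matrix (Fin d) (Fin d) ℂ := Q * X with hqxdef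
  set px : Matrix (Fin d) (Fin d) ℂ := P * X with hpxdef
  set r : ℝ := (Zᴴ * Z).trace.re with hrdef
  have hτt : t ≤ τ := hi
  clear_value r px qx w Z g τ s X L P Q Aavg c δr t
  -- basic trace identities
  have hfqx : (qxᴴ * qx).trace.re = s := by
    rw [hqxdef, sandwich_trace hQ2 hQH hXH hXX, hsdef]
  have hfpx : (pxᴴ * px).trace.re = 1 - s := by
    rw [hpxdef, sandwich_trace hP2 hPH hXH hXX, hPdef, Matrix.sub_mul, Matrix.one_mul,
      Matrix.trace_sub, Complex.sub_re, hρtr, hsdef, Complex.one_re]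
  have hfg : (gᴴ * g).trace.re = τ := by
    rw [hgdef, sandwich_trace hL2 hLH hXH hXX, hτdef]
  -- f w = τ - r
  have hQg : qxᴴ * w = X * (Q * g) := by
    rw [hqxdef, hwdef, Matrix.conjTranspose_mul, hXH, hQH, Matrix.mul_assoc,
      ← Matrix.mul_assoc Q Q g, hQ2]
  have hPg : pxᴴ * Z = X * (P * g) := by
    rw [hpxdef, hZdef, Matrix.conjTranspose_mul, hXH, hPH, Matrix.mul_assoc,
      ← Matrix.mul_assoc P P g, hP2]
  have hww : (wᴴ * w).trace.re = τ - r := by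
    have e1 : wᴴ * w = gᴴ * (Q * g) := by
      rw [hwdef, Matrix.conjTranspose_mul, hQH, Matrix.mul_assoc, ← Matrix.mul_assoc Q Q g, hQ2]
    have e2 : Zᴴ * Z = gᴴ * (P * g) := by
      rw [hZdef, Matrix.conjTranspose_mul, hPH, Matrix.mul_assoc, ← Matrix.mul_assoc P P g, hP2]
    have e3 : Q * g = g - P * g := by
      rw [hPdef, Matrix.sub_mul, Matrix.one_mul]
      abel
    rw [e1, e3, Matrix.mul_sub, Matrix.trace_sub, Complex.sub_re, ← e2]
    have : (gᴴ * g).trace.re = τ := hfg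
    rw [this, hrdef]
  have hr0 : 0 ≤ r := by
    rw [hrdef]
    exact trace_re_nonneg (Matrix.posSemidef_conjTranspose_mul_self Z)
  have hrτ : r ≤ τ := by
    have := trace_re_nonneg (Matrix.posSemidef_conjTranspose_mul_self w)
    rw [hww] at this
    linarith
  -- the star inequality
  have hstar : τ ≤ Real.sqrt s * Real.sqrt (τ - r) + Real.sqrt (1 - s) * Real.sqrt r := by
    have hdecomp : (L * ρ).trace = (qxᴴ * w).trace + (pxᴴ * Z).trace := by
      rw [hQg, hPg, ← Matrix.trace_add, ← Matrix.mul_add]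
      have e4 : Q * g + P * g = g := by
        rw [hPdef, Matrix.sub_mul, Matrix.one_mul]
        abel
      have e5 : (X * (L * X)).trace = (L * ρ).trace := by
        rw [Matrix.trace_mul_comm, Matrix.mul_assoc, hXX]
      rw [e4, hgdef, e5]
    have hcs1 : (qxᴴ * w).trace.re ≤ Real.sqrt s * Real.sqrt (τ - r) := by
      have := trace_cs qx w
      rwa [hfqx, hww] at this
    have hcs2 : (pxᴴ * Z).trace.re ≤ Real.sqrt (1 - s) * Real.sqrt r := by
      have := trace_cs px Z
      rwa [hfpx, ← hrdef] at this
    have heq : τ = (qxᴴ * w).trace.re + (pxᴴ * Z).trace.re := by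
      rw [hτdef, hdecomp, Complex.add_re]
    calc τ = (qxᴴ * w).trace.re + (pxᴴ * Z).trace.re := heq
      _ ≤ _ := add_le_add hcs1 hcs2
  -- the bound r ≤ c * τ
  have hrc : r ≤ c * τ := by
    -- r = tr((L Z)ᴴ g)
    have hZP : Zᴴ * P = Zᴴ := by
      have : P * Z = Z := by
        rw [hZdef, ← Matrix.mul_assoc, hP2]
      calc Zᴴ * P = Zᴴ * Pᴴ := by rw [hPH]
        _ = (P * Z)ᴴ := by rw [← Matrix.conjTranspose_mul]
        _ = Zᴴ := by rw [this]
    have hLg : L * g = g := by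
      rw [hgdef, ← Matrix.mul_assoc, hL2]
    have hZZLZ : Zᴴ * Z = (L * Z)ᴴ * g := by
      calc Zᴴ * Z = Zᴴ * (P * g) := by rw [hZdef]
        _ = (Zᴴ * P) * g := by rw [Matrix.mul_assoc]
        _ = Zᴴ * g := by rw [hZP]
        _ = Zᴴ * (L * g) := by rw [hLg]
        _ = (Zᴴ * L) * g := by rw [Matrix.mul_assoc]
        _ = (L * Z)ᴴ * g := by rw [Matrix.conjTranspose_mul, hLH]
    -- f (L*Z) ≤ (n δr) r
    have hfLZ : ((L * Z)ᴴ * (L * Z)).trace.re ≤ (n : ℝ) * δr * r := by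
      have e5 : (L * Z)ᴴ * (L * Z) = Zᴴ * (L * Z) := by
        rw [Matrix.conjTranspose_mul, hLH, Matrix.mul_assoc, ← Matrix.mul_assoc L L Z, hL2]
      have e6 : (Zᴴ * (L * Z)).trace = ((P * L * P) * (g * gᴴ)).trace := by
        calc (Zᴴ * (L * Z)).trace = ((L * Z) * Zᴴ).trace := Matrix.trace_mul_comm _ _
          _ = (L * (Z * Zᴴ)).trace := by rw [Matrix.mul_assoc]
          _ = ((P * L * P) * (g * gᴴ)).trace := by
              have e7 : Z * Zᴴ = P * (g * gᴴ) * P := by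
                rw [hZdef, Matrix.conjTranspose_mul, hPH]
                simp only [Matrix.mul_assoc]
              rw [e7]
              have h1 : L * (P * (g * gᴴ) * P) = (L * P * (g * gᴴ)) * P := by
                simp only [Matrix.mul_assoc]
              rw [h1, Matrix.trace_mul_comm]
              have h2 : P * (L * P * (g * gᴴ)) = P * L * P * (g * gᴴ) := by
                simp only [Matrix.mul_assoc]
              rw [h2]
      have hG : (g * gᴴ).PosSemidef := Matrix.posSemidef_self_mul_conjTranspose g
      -- mono 1 : L ≤ ∑ Λ j under conjugation
      have hBL : ((∑ j, Λ j) - L).PosSemidef := by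
        have he : (∑ j, Λ j) - L = ∑ j ∈ Finset.univ.erase i, Λ j := by
          rw [hLdef]
          exact (eq_sub_of_add_eq (Finset.sum_erase_add Finset.univ Λ (Finset.mem_univ i))).symm
        rw [he]
        apply Finset.sum_induction _ _ (fun A B hA hB => hA.add hB) Matrix.PosSemidef.zero
        intro j _
        have := Matrix.posSemidef_conjTranspose_mul_self (Λ j)
        rwa [hΛH j, hΛ2 j] at this
      have hPBLP : (P * ((∑ j, Λ j) - L) * P).PosSemidef := by
        have := hBL.conjTranspose_mul_mul_same (B := P)
        rwa [hPH] at this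
      have hmono1 : ((P * L * P) * (g * gᴴ)).trace.re ≤
          ((P * (∑ j, Λ j) * P) * (g * gᴴ)).trace.re := by
        apply trace_mul_re_mono _ hG
        have : P * (∑ j, Λ j) * P - P * L * P = P * ((∑ j, Λ j) - L) * P := by
          rw [Matrix.mul_sub, Matrix.sub_mul]
        rw [this]
        exact hPBLP
      -- ∑ Λ j = n • Aavg
      have hsum : (∑ j, Λ j) = (n : ℂ) • Aavg := by
        rw [hAdef, smul_smul, mul_inv_cancel₀ (by exact_mod_cast hn.ne' : (n:ℂ) ≠ 0), one_smul]
      have hmono2 : ((P * Aavg * P) * (g * gᴴ)).trace.re ≤ δr * (P * (g * gᴴ)).trace.re := by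
        have := trace_mul_re_mono (A := P * Aavg * P) (B := (δr : ℂ) • P) hkey hG
        have e8 : (((δr : ℂ) • P) * (g * gᴴ)).trace.re = δr * (P * (g * gᴴ)).trace.re := by
          rw [Matrix.smul_mul, Matrix.trace_smul]
          simp [smul_eq_mul, Complex.mul_re]
        rw [e8] at this
        exact this
      have e9 : ((P * (∑ j, Λ j) * P) * (g * gᴴ)).trace.re =
          (n : ℝ) * ((P * Aavg * P) * (g * gᴴ)).trace.re := by
        rw [hsum, Matrix.mul_smul, Matrix.smul_mul, Matrix.smul_mul, Matrix.trace_smul]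
        simp [smul_eq_mul, Complex.mul_re, Complex.natCast_re, Complex.natCast_im]
      have e10 : (P * (g * gᴴ)).trace.re = r := by
        have : (P * (g * gᴴ)).trace = (Zᴴ * Z).trace := by
          have e11 : Zᴴ * Z = gᴴ * (P * g) := by
            rw [hZdef, Matrix.conjTranspose_mul, hPH, Matrix.mul_assoc,
              ← Matrix.mul_assoc P P g, hP2]
          rw [e11]
          have h3 : P * (g * gᴴ) = (P * g) * gᴴ := by rw [Matrix.mul_assoc]
          rw [h3, Matrix.trace_mul_comm]
        rw [this, hrdef]
      have hnn : (0:ℝ) ≤ (n:ℝ) := by positivity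
      calc ((L * Z)ᴴ * (L * Z)).trace.re = ((P * L * P) * (g * gᴴ)).trace.re := by
            rw [e5, e6]
        _ ≤ ((P * (∑ j, Λ j) * P) * (g * gᴴ)).trace.re := hmono1
        _ = (n : ℝ) * ((P * Aavg * P) * (g * gᴴ)).trace.re := e9
        _ ≤ (n : ℝ) * (δr * (P * (g * gᴴ)).trace.re) := by
            apply mul_le_mul_of_nonneg_left hmono2 hnn
        _ = (n : ℝ) * δr * r := by rw [e10]; ring
    -- Cauchy-Schwarz : r ≤ √(f(LZ)) √τ
    have hrcs : r ≤ Real.sqrt ((n : ℝ) * δr * r) * Real.sqrt τ := by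
      have h12 : r = ((L * Z)ᴴ * g).trace.re := by rw [hrdef, hZZLZ]
      have h13 := trace_cs (L * Z) g
      rw [hfg] at h13
      have h14 : Real.sqrt (((L * Z)ᴴ * (L * Z)).trace.re) ≤ Real.sqrt ((n : ℝ) * δr * r) :=
        Real.sqrt_le_sqrt hfLZ
      calc r = ((L * Z)ᴴ * g).trace.re := h12
        _ ≤ Real.sqrt (((L * Z)ᴴ * (L * Z)).trace.re) * Real.sqrt τ := h13
        _ ≤ Real.sqrt ((n : ℝ) * δr * r) * Real.sqrt τ :=
            mul_le_mul_of_nonneg_right h14 (Real.sqrt_nonneg _)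
    have hτ0 : (0:ℝ) < τ := lt_of_lt_of_le ht0 hτt
    rcases eq_or_lt_of_le hr0 with h | h
    · rw [← h]
      positivity
    · have hsq : r ^ 2 ≤ ((n : ℝ) * δr * r) * τ := by
        have := pow_le_pow_left₀ (le_of_lt h) hrcs 2
        rwa [mul_pow, Real.sq_sqrt (by positivity), Real.sq_sqrt (le_of_lt hτ0)] at this
      have : r ≤ (n : ℝ) * δr * τ := by nlinarith
      rw [hcdef]
      linarith [this]
  -- remaining scalar facts
  have hτ1 : τ ≤ 1 := by
    have h1L : ((1 : Matrix (Fin d) (Fin d) ℂ) - L).PosSemidef := by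
      have hherm : ((1 : Matrix (Fin d) (Fin d) ℂ) - L)ᴴ = 1 - L := by
        rw [Matrix.conjTranspose_sub, Matrix.conjTranspose_one, hLH]
      have hidem : ((1 : Matrix (Fin d) (Fin d) ℂ) - L) * (1 - L) = 1 - L := by
        have e : ((1 : Matrix (Fin d) (Fin d) ℂ) - L) * (1 - L) = 1 - L - L + L * L := by
          noncomm_ring
        rw [e, hL2]
        abel
      have := Matrix.posSemidef_conjTranspose_mul_self ((1 : Matrix (Fin d) (Fin d) ℂ) - L)
      rwa [hherm, hidem] at this
    have := trace_mul_re_mono (A := L) (B := 1) h1L hρ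
    rwa [Matrix.one_mul, hρtr, Complex.one_re, ← hτdef] at this
  have hs0 : 0 ≤ s := by
    rw [hsdef]
    exact trace_mul_re_nonneg hQpsd hρ
  have hs1 : s ≤ 1 := by
    have := trace_mul_re_mono (A := Q) (B := 1) (hPdef ▸ hPpsd) hρ
    rwa [Matrix.one_mul, hρtr, Complex.one_re, ← hsdef] at this
  -- conclude
  exact endgame ht0 ht1 hτ1 hτt hs0 hs1 hr0 hrτ hrc hc0 hcle hstar
end

section
/- (Quantum union bound.) Let ρ be a density matrix on ℂ^d and let Λ_1, …, Λ_T be orthogonal projections on ℂ^d such that tr(Λ_t ρ) ≤ ε for every t. Then, applying the two-outcome projective measurements {Λ_t, I−Λ_t} in sequence to ρ, the probability that at least one measurement yields the outcome associated with Λ_t satisfies 1 − tr( M ρ Mᴴ ) ≤ 4Tε, where M := (I−Λ_T)(I−Λ_{T−1})···(I−Λ_1). -/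
open Matrix
noncomputable def vmap {d : ℕ} (S A : Matrix (Fin d) (Fin d) ℂ) :
    EuclideanSpace ℂ (Fin d × Fin d) := WithLp.toLp 2 (fun p : Fin d × Fin d => (A * S) p.1 p.2)

lemma vmap_add {d : ℕ} (S A B : Matrix (Fin d) (Fin d) ℂ) :
    vmap S (A + B) = vmap S A + vmap S B := by
  ext p
  simp [vmap, Matrix.add_mul]

lemma inner_vmap {d : ℕ} (S : Matrix (Fin d) (Fin d) ℂ) (hS : Sᴴ = S)
    (A B : Matrix (Fin d) (Fin d) ℂ) :
    (inner ℂ (vmap S B) (vmap S A) : ℂ) = (A * (S * S) * Bᴴ).trace := by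
  have h : A * (S * S) * Bᴴ = (A * S) * (B * S)ᴴ := by
    rw [conjTranspose_mul, hS]
    simp [Matrix.mul_assoc]
  rw [h]
  simp only [PiLp.inner_apply, RCLike.inner_apply, vmap, PiLp.toLp_apply, Matrix.trace, Matrix.diag,
    mul_apply, conjTranspose_apply]
  rw [Fintype.sum_prod_type]
  congr 1

open scoped ComplexOrder

open scoped MatrixOrder in
lemma exists_sqrt_aux {d : ℕ} (ρ : Matrix (Fin d) (Fin d) ℂ) (hρ : ρ.PosSemidef) :
    ∃ S : Matrix (Fin d) (Fin d) ℂ, Sᴴ = S ∧ S * S = ρ :=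
  ⟨CFC.sqrt ρ, (CFC.sqrt_nonneg ρ).posSemidef.1, CFC.sqrt_mul_sqrt_self ρ hρ.nonneg⟩

/-- Quantum union bound, Gao. If each projector `Λ_t` accepts the density
matrix `ρ` with probability at most `ε`, then performing the measurements
`{Λ_1, I−Λ_1}, …, {Λ_T, I−Λ_T}` in sequence, the probability that at least one yields the
outcome `Λ_t`, namely `1 − tr(MρMᴴ)` with `M = (I−Λ_T)···(I−Λ_1)`, is at most `4Tε`. -/
theorem stmt_18 {d T : ℕ} (ρ : Matrix (Fin d) (Fin d) ℂ)
    (hρ : ρ.PosSemidef) (hρtr : ρ.trace = 1)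
    (Λ : Fin T → Matrix (Fin d) (Fin d) ℂ)
    (hΛH : ∀ t, (Λ t).IsHermitian) (hΛ2 : ∀ t, Λ t * Λ t = Λ t)
    (ε : ℝ) (hε : ∀ t, ((Λ t * ρ).trace).re ≤ ε)
    (M : Matrix (Fin d) (Fin d) ℂ)
    (hM : M = ((List.ofFn fun t : Fin T => (1 : Matrix (Fin d) (Fin d) ℂ) - Λ t).reverse).prod) :
    1 - ((M * ρ * Mᴴ).trace).re ≤ 4 * T * ε := by
  classical
  obtain ⟨S, hSH, hSS⟩ := exists_sqrt_aux ρ hρ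
  set V : Matrix (Fin d) (Fin d) ℂ → EuclideanSpace ℂ (Fin d × Fin d) := vmap S with hV
  have hinner : ∀ A B : Matrix (Fin d) (Fin d) ℂ,
      (inner ℂ (V B) (V A) : ℂ) = (A * ρ * Bᴴ).trace := by
    intro A B; rw [hV, inner_vmap S hSH, hSS]
  have hVadd : ∀ A B : Matrix (Fin d) (Fin d) ℂ, V (A + B) = V A + V B := by
    intro A B; rw [hV]; exact vmap_add S A B
  -- the chain of partial products
  set L : List (Matrix (Fin d) (Fin d) ℂ) := List.ofFn (fun t : Fin T => 1 - Λ t) with hL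
  set c : ℕ → Matrix (Fin d) (Fin d) ℂ := fun n => ((L.take n).reverse).prod with hc
  have hc0 : c 0 = 1 := by simp [hc]
  have hcT : c T = M := by
    have : L.take T = L := by
      apply List.take_of_length_le; simp [hL]
    rw [hc]; simp only [this]; rw [hM]
  have hcsucc : ∀ n, ∀ h : n < T, c (n + 1) = (1 - Λ ⟨n, h⟩) * c n := by
    intro n h
    have ht : L.take (n + 1) = L.take n ++ [1 - Λ ⟨n, h⟩] := by
      rw [List.take_succ]
      congr 1
      simp [hL, List.getElem?_ofFn, List.ofFnNthVal, h]
    simp [hc, ht]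
  set Λ' : ℕ → Matrix (Fin d) (Fin d) ℂ := fun n => if h : n < T then Λ ⟨n, h⟩ else 0 with hΛ'
  set X : ℕ → Matrix (Fin d) (Fin d) ℂ := fun n => Λ' n * c n with hX
  have hΛ'H : ∀ n, ∀ _ : n < T, (Λ' n)ᴴ = Λ' n := by
    intro n h; simp only [hΛ', dif_pos h]; exact hΛH ⟨n, h⟩
  have hΛ'2 : ∀ n, ∀ _ : n < T, Λ' n * Λ' n = Λ' n := by
    intro n h; simp [hΛ', dif_pos h, hΛ2 ⟨n, h⟩]
  have hsplit : ∀ n, ∀ h : n < T, c n = X n + c (n + 1) := by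
    intro n h
    rw [hcsucc n h, hX]
    simp only [hΛ', dif_pos h, Matrix.sub_mul, Matrix.one_mul]
    abel
  have hΛ'c : ∀ n, ∀ h : n < T, Λ' n * c (n + 1) = 0 := by
    intro n h
    rw [hcsucc n h, ← Matrix.mul_assoc]
    have : Λ' n * (1 - Λ ⟨n, h⟩) = 0 := by
      simp only [hΛ', dif_pos h, Matrix.mul_sub, Matrix.mul_one, hΛ2 ⟨n, h⟩, sub_self]
    rw [this, Matrix.zero_mul]
  have horth : ∀ n, ∀ h : n < T, (inner ℂ (V (X n)) (V (c (n + 1))) : ℂ) = 0 := by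
    intro n h
    rw [hinner]
    have h1 : (X n)ᴴ = (c n)ᴴ * Λ' n := by rw [hX]; rw [conjTranspose_mul, hΛ'H n h]
    rw [h1, ← Matrix.mul_assoc, Matrix.trace_mul_comm]
    have : Λ' n * (c (n + 1) * ρ * (c n)ᴴ) = 0 := by
      rw [← Matrix.mul_assoc, ← Matrix.mul_assoc, hΛ'c n h]
      simp
    rw [this, Matrix.trace_zero]
  set f : ℕ → ℝ := fun n => ‖V (c n)‖ ^ 2 with hf
  have hnormsq : ∀ A : Matrix (Fin d) (Fin d) ℂ, ‖V A‖ ^ 2 = ((A * ρ * Aᴴ).trace).re := by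
    intro A
    rw [norm_sq_eq_re_inner (𝕜 := ℂ), hinner]; rfl
  have hpyth : ∀ n ∈ Finset.range T, ‖V (X n)‖ ^ 2 = f n - f (n + 1) := by
    intro n hn
    rw [Finset.mem_range] at hn
    have hv : V (c n) = V (X n) + V (c (n + 1)) := by rw [hsplit n hn, hVadd]
    have hns := norm_add_sq (𝕜 := ℂ) (V (X n)) (V (c (n + 1)))
    rw [horth n hn] at hns
    simp only [map_zero, mul_zero, add_zero] at hns
    have : f n = ‖V (X n)‖ ^ 2 + f (n + 1) := by
      simp only [hf]; rw [hv, hns]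
    linarith
  have htel1 : ∑ n ∈ Finset.range T, ‖V (X n)‖ ^ 2 = f 0 - f T := by
    rw [Finset.sum_congr rfl hpyth]
    exact Finset.sum_range_sub' f T
  have hf0 : f 0 = 1 := by
    simp only [hf, hc0]
    rw [hnormsq]
    simp [hρtr]
  -- vector telescoping
  have htel2 : V 1 - V (c T) = ∑ n ∈ Finset.range T, V (X n) := by
    have hterm : ∀ n ∈ Finset.range T, V (X n) = V (c n) - V (c (n + 1)) := by
      intro n hn
      rw [Finset.mem_range] at hn
      have := hsplit n hn
      have h2 : V (c n) = V (X n) + V (c (n + 1)) := by rw [this, hVadd]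
      rw [h2]; abel
    rw [Finset.sum_congr rfl hterm, Finset.sum_range_sub' (fun n => V (c n)) T, hc0]
  set r : ℝ := (inner ℂ (V 1) (V (c T)) : ℂ).re with hr
  have hinner11 : (inner ℂ (V 1) (V 1) : ℂ) = 1 := by
    rw [hinner]; simp [hρtr]
  have hsum_eq : 1 - r = ∑ n ∈ Finset.range T, (inner ℂ (V 1) (V (X n)) : ℂ).re := by
    have h1 : (inner ℂ (V 1) (V 1 - V (c T)) : ℂ) = 1 - inner ℂ (V 1) (V (c T)) := by
      rw [inner_sub_right, hinner11]
    have h2 : (inner ℂ (V 1) (V 1 - V (c T)) : ℂ)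
        = ∑ n ∈ Finset.range T, (inner ℂ (V 1) (V (X n)) : ℂ) := by
      rw [htel2, inner_sum]
    rw [h2] at h1
    have := congrArg Complex.re h1.symm
    rw [Complex.sub_re, Complex.one_re, Complex.re_sum] at this
    rw [hr, this]
  have hΛnorm : ∀ n, ∀ _ : n < T, ‖V (Λ' n)‖ ^ 2 ≤ ε := by
    intro n h
    rw [hnormsq, hΛ'H n h, Matrix.trace_mul_cycle, hΛ'2 n h]
    simpa only [hΛ', dif_pos h] using hε ⟨n, h⟩
  have hterm2 : ∀ n ∈ Finset.range T,
      (inner ℂ (V 1) (V (X n)) : ℂ).re ≤ Real.sqrt ε * ‖V (X n)‖ := by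
    intro n hn
    rw [Finset.mem_range] at hn
    have heq : (inner ℂ (V 1) (V (X n)) : ℂ) = inner ℂ (V (Λ' n)) (V (X n)) := by
      rw [hinner, hinner, conjTranspose_one, Matrix.mul_one, hΛ'H n hn]
      conv_rhs => rw [Matrix.trace_mul_cycle]
      have hx : Λ' n * X n = X n := by
        conv_lhs => rw [hX]
        rw [← Matrix.mul_assoc, hΛ'2 n hn]
      rw [hx]
    rw [heq]
    calc (inner ℂ (V (Λ' n)) (V (X n)) : ℂ).re ≤ ‖V (Λ' n)‖ * ‖V (X n)‖ := by
          simpa using re_inner_le_norm (𝕜 := ℂ) (V (Λ' n)) (V (X n))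
      _ ≤ Real.sqrt ε * ‖V (X n)‖ := by
          apply mul_le_mul_of_nonneg_right _ (norm_nonneg _)
          have hb := hΛnorm n hn
          have h0ε : (0:ℝ) ≤ ε := le_trans (sq_nonneg _) hb
          exact (Real.le_sqrt (norm_nonneg _) h0ε).mpr hb
  set a : ℝ := 1 - f T with hadef
  have hsumsq : ∑ n ∈ Finset.range T, ‖V (X n)‖ ^ 2 = a := by rw [htel1, hf0]
  have ha0 : (0:ℝ) ≤ a := by
    rw [← hsumsq]
    exact Finset.sum_nonneg fun _ _ => sq_nonneg _
  have hsumnorm : ∑ n ∈ Finset.range T, ‖V (X n)‖ ≤ Real.sqrt (T * a) := by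
    have hnn : (0:ℝ) ≤ ∑ n ∈ Finset.range T, ‖V (X n)‖ :=
      Finset.sum_nonneg fun _ _ => norm_nonneg _
    rw [Real.le_sqrt hnn (mul_nonneg (Nat.cast_nonneg _) ha0)]
    calc (∑ n ∈ Finset.range T, ‖V (X n)‖) ^ 2
        ≤ (Finset.range T).card * ∑ n ∈ Finset.range T, ‖V (X n)‖ ^ 2 :=
          sq_sum_le_card_mul_sum_sq
      _ = T * a := by rw [Finset.card_range, hsumsq]
  have hkey : 1 - r ≤ Real.sqrt ε * Real.sqrt (T * a) := by
    rw [hsum_eq]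
    calc ∑ n ∈ Finset.range T, (inner ℂ (V 1) (V (X n)) : ℂ).re
        ≤ ∑ n ∈ Finset.range T, Real.sqrt ε * ‖V (X n)‖ := Finset.sum_le_sum hterm2
      _ = Real.sqrt ε * ∑ n ∈ Finset.range T, ‖V (X n)‖ := by rw [Finset.mul_sum]
      _ ≤ Real.sqrt ε * Real.sqrt (T * a) :=
          mul_le_mul_of_nonneg_left hsumnorm (Real.sqrt_nonneg _)
  have hV1 : ‖V (1 : Matrix (Fin d) (Fin d) ℂ)‖ = 1 := by
    have h2 : ‖V (1 : Matrix (Fin d) (Fin d) ℂ)‖ ^ 2 = 1 := by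
      rw [hnormsq]; simp [hρtr]
    nlinarith [norm_nonneg (V (1 : Matrix (Fin d) (Fin d) ℂ))]
  have hle2 : a ≤ 2 * (1 - r) := by
    have hcs : r ≤ ‖V (1 : Matrix (Fin d) (Fin d) ℂ)‖ * ‖V (c T)‖ := by
      rw [hr]; simpa using re_inner_le_norm (𝕜 := ℂ) (V 1) (V (c T))
    rw [hV1, one_mul] at hcs
    have hfT : f T = ‖V (c T)‖ ^ 2 := rfl
    nlinarith [norm_nonneg (V (c T)), sq_nonneg (1 - ‖V (c T)‖)]
  have hgoal : 1 - ((M * ρ * Mᴴ).trace).re = a := by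
    have hfm : f T = ((M * ρ * Mᴴ).trace).re := by
      rw [show f T = ‖V (c T)‖ ^ 2 from rfl, hcT, hnormsq]
    rw [hadef, hfm]
  rw [hgoal]
  rcases Nat.eq_zero_or_pos T with hT | hT
  · subst hT
    simp only [Nat.cast_zero, zero_mul, Real.sqrt_zero, mul_zero] at hkey ⊢
    linarith
  · have h0ε : (0:ℝ) ≤ ε := le_trans (sq_nonneg _) (hΛnorm 0 hT)
    have hs : Real.sqrt ε ^ 2 = ε := Real.sq_sqrt h0ε
    have ht : Real.sqrt ((T:ℝ) * a) ^ 2 = (T:ℝ) * a :=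
      Real.sq_sqrt (mul_nonneg (Nat.cast_nonneg _) ha0)
    have hcomb : a ≤ 2 * (Real.sqrt ε * Real.sqrt (T * a)) := by linarith
    rcases eq_or_lt_of_le ha0 with h0 | h0
    · rw [← h0]
      exact mul_nonneg (mul_nonneg (by norm_num) (Nat.cast_nonneg _)) h0ε
    · have h2 : a * a ≤ (2 * (Real.sqrt ε * Real.sqrt (T * a))) *
          (2 * (Real.sqrt ε * Real.sqrt (T * a))) :=
        mul_self_le_mul_self (le_of_lt h0) hcomb
      have h4 : (Real.sqrt ε * Real.sqrt ((T:ℝ) * a)) ^ 2 = ε * ((T:ℝ) * a) := by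
        rw [mul_pow, hs, ht]
      have h6 : (2 * (Real.sqrt ε * Real.sqrt ((T:ℝ) * a))) *
          (2 * (Real.sqrt ε * Real.sqrt ((T:ℝ) * a))) = 4 * (ε * ((T:ℝ) * a)) := by
        calc (2 * (Real.sqrt ε * Real.sqrt ((T:ℝ) * a))) *
            (2 * (Real.sqrt ε * Real.sqrt ((T:ℝ) * a)))
            = 4 * (Real.sqrt ε * Real.sqrt ((T:ℝ) * a)) ^ 2 := by ring
          _ = 4 * (ε * ((T:ℝ) * a)) := by rw [h4]
      rw [h6] at h2
      have h7 : (4:ℝ) * (ε * ((T:ℝ) * a)) = (4 * (T:ℝ) * ε) * a := by ring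
      rw [h7] at h2
      exact le_of_mul_le_mul_right h2 h0
end
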